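/- arXiv:1307.5547 — 9 statements merged into one kernel-verified Lean document; each statement's English description precedes it below -/
import Mathlib

section
/- Every graph G whose vertex set is partitioned into a set P of probes and an independent set N of non-probes and which admits a probe interval model also admits a normal probe interval model. -/
open Set

/-- A set of columns is consecutive in the column order. -/
def ConsecSet {k : ℕ} (A : Set (Fin k)) : Prop :=
  ∀ i j l : Fin k, i ≤ j → j ≤ l → i ∈ A → l ∈ A → j ∈ A

/-- Every row of the 0-1 matrix `M` has a nonempty consecutive block of 1's. -/
def RowsOK {V : Type} {k : ℕ} (M : V → Fin k → Prop) : Prop :=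
  ∀ v : V, {j | M v j}.Nonempty ∧ ConsecSet {j | M v j}

/-- The matrix `M` represents exactly the adjacencies of `G`, where `P` is the probe set:
two distinct vertices are adjacent iff some column has a 1 in both rows and at least
one of the two vertices is a probe. -/
def Represents {V : Type} {k : ℕ} (G : SimpleGraph V) (P : Set V)
    (M : V → Fin k → Prop) : Prop :=
  ∀ u v : V, u ≠ v → (G.Adj u v ↔ (u ∈ P ∨ v ∈ P) ∧ ∃ j, M u j ∧ M v j)

/-- `M` is a probe interval model of `G` with probe set `P`. -/
def IsPIModel {V : Type} {k : ℕ} (G : SimpleGraph V) (P : Set V)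
    (M : V → Fin k → Prop) : Prop :=
  RowsOK M ∧ Represents G P M

/-- The pairs of vertices that the matrix represents as adjacent. -/
def RepAdj {V : Type} {k : ℕ} (P : Set V) (M : V → Fin k → Prop) (u v : V) : Prop :=
  u ≠ v ∧ (u ∈ P ∨ v ∈ P) ∧ ∃ j, M u j ∧ M v j

/-- `c` is the left endpoint of row `v`: the first column where the row has a 1. -/
def IsLeftEnd {V : Type} {k : ℕ} (M : V → Fin k → Prop) (v : V) (c : Fin k) : Prop :=
  M v c ∧ ∀ j, M v j → c ≤ j

/-- `c` is the right endpoint of row `v`: the last column where the row has a 1. -/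
def IsRightEnd {V : Type} {k : ℕ} (M : V → Fin k → Prop) (v : V) (c : Fin k) : Prop :=
  M v c ∧ ∀ j, M v j → j ≤ c

/-- A proper left endpoint: the left endpoint of a row with a 1 in more than one column. -/
def IsProperLeftEnd {V : Type} {k : ℕ} (M : V → Fin k → Prop) (v : V) (c : Fin k) : Prop :=
  IsLeftEnd M v c ∧ ∃ j, M v j ∧ j ≠ c

/-- A proper right endpoint: the right endpoint of a row with a 1 in more than one column. -/
def IsProperRightEnd {V : Type} {k : ℕ} (M : V → Fin k → Prop) (v : V) (c : Fin k) : Prop :=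
  IsRightEnd M v c ∧ ∃ j, M v j ∧ j ≠ c

/-- `M'` is obtained from `M` by a contraction of row `v`: the first or last 1 of
row `v` is changed to a 0, resulting in a shorter (still nonempty) interval. -/
def Contraction {V : Type} {k : ℕ} (M M' : V → Fin k → Prop) (v : V) : Prop :=
  ∃ c : Fin k, (IsProperLeftEnd M v c ∨ IsProperRightEnd M v c) ∧
    ∀ u j, M' u j ↔ M u j ∧ ¬(u = v ∧ j = c)

/-- Row `v` is taut: every contraction of it changes the set of vertex pairs that
the matrix represents as adjacent. -/
def TautRow {V : Type} {k : ℕ} (P : Set V) (M : V → Fin k → Prop) (v : V) : Prop :=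
  ∀ M' : V → Fin k → Prop, Contraction M M' v → RepAdj P M' ≠ RepAdj P M

/-- Every row of the model is taut. -/
def Taut {V : Type} {k : ℕ} (P : Set V) (M : V → Fin k → Prop) : Prop :=
  ∀ v : V, TautRow P M v

/-- The matrix obtained from `M` by merging the consecutive columns `i` and `i + 1`
(replacing them by their entrywise OR). -/
def mergeCols {V : Type} {k : ℕ} (M : V → Fin k → Prop) (i : ℕ) :
    V → Fin (k - 1) → Prop := fun v j =>
  if h1 : j.val < i then M v ⟨j.val, by have := j.isLt; omega⟩
  else if h2 : j.val = i then
    M v ⟨i, by have := j.isLt; omega⟩ ∨ M v ⟨i + 1, by have := j.isLt; omega⟩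
  else M v ⟨j.val + 1, by have := j.isLt; omega⟩

/-- The consecutive columns `i` and `i + 1` of the model `M` of `G` can be merged:
replacing them by their entrywise OR again yields a probe interval model representing
the same adjacencies. -/
def CanMerge {V : Type} {k : ℕ} (G : SimpleGraph V) (P : Set V)
    (M : V → Fin k → Prop) (i : ℕ) : Prop :=
  i + 1 < k ∧ IsPIModel G P (mergeCols M i)

/-- No two consecutive columns of the model can be merged. -/
def MinimalModel {V : Type} {k : ℕ} (G : SimpleGraph V) (P : Set V)
    (M : V → Fin k → Prop) : Prop :=
  ∀ i : ℕ, ¬ CanMerge G P M i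

/-- A normal probe interval model: a probe interval model that is taut and minimal. -/
def IsNormalModel {V : Type} {k : ℕ} (G : SimpleGraph V) (P : Set V)
    (M : V → Fin k → Prop) : Prop :=
  IsPIModel G P M ∧ Taut P M ∧ MinimalModel G P M

/-- The vertex set of a column: the vertices whose rows have a 1 in that column. -/
def colVerts {V : Type} {k : ℕ} (M : V → Fin k → Prop) (j : Fin k) : Set V :=
  {v | M v j}

/-- The probe set of a column. -/
def probeSetCol {V : Type} {k : ℕ} (P : Set V) (M : V → Fin k → Prop)
    (j : Fin k) : Set V :=
  {v | v ∈ P ∧ M v j}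

/-- The probe set of the column with (natural number) index `n`, empty if out of range. -/
def probeSetAt {W : Type} {K : ℕ} (P : Set W) (M : W → Fin K → Prop) (n : ℕ) : Set W :=
  {v | v ∈ P ∧ ∃ hn : n < K, M v ⟨n, hn⟩}

/-- `G` is a probe interval graph with respect to the probe set `P`. -/
def IsPIGraph {V : Type} (G : SimpleGraph V) (P : Set V) : Prop :=
  ∃ (k : ℕ) (M : V → Fin k → Prop), IsPIModel G P M

/-- `x` is a simplicial non-probe: a non-probe whose neighborhood induces a
complete subgraph. -/
def SimpNonProbe {V : Type} (G : SimpleGraph V) (P : Set V) (x : V) : Prop :=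
  x ∉ P ∧ G.IsClique (G.neighborSet x)

/-- The set `N_S` of simplicial non-probes. -/
def setNS {V : Type} (G : SimpleGraph V) (P : Set V) : Set V :=
  {x | SimpNonProbe G P x}

/-- `K` is (the vertex set of) a maximal complete subgraph of `H`. -/
def IsMaxClique {W : Type} (H : SimpleGraph W) (K : Set W) : Prop :=
  H.IsClique K ∧ ∀ K' : Set W, H.IsClique K' → K ⊆ K' → K' = K

/-- `K` is (the vertex set of) a maximal complete subgraph of `G[P]`. -/
def IsMaxPClique {V : Type} (G : SimpleGraph V) (P : Set V) (K : Set V) : Prop :=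
  (K ⊆ P ∧ K.Pairwise G.Adj) ∧
    ∀ K' : Set V, K' ⊆ P → K'.Pairwise G.Adj → K ⊆ K' → K' = K

/-- A clique column: its vertex set contains a clique of `G[P]`. -/
def IsCliqueCol {V : Type} {k : ℕ} (G : SimpleGraph V) (P : Set V)
    (M : V → Fin k → Prop) (j : Fin k) : Prop :=
  ∃ K : Set V, IsMaxPClique G P K ∧ K ⊆ colVerts M j

/-- A left semi-clique column: it contains a proper right endpoint of a probe and a
proper left endpoint of a non-probe, but no left endpoint of a probe and no right
endpoint of a non-probe. -/
def IsLeftSemiCol {V : Type} {k : ℕ} (P : Set V) (M : V → Fin k → Prop)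
    (j : Fin k) : Prop :=
  (∃ p ∈ P, IsProperRightEnd M p j) ∧ (∃ x, x ∉ P ∧ IsProperLeftEnd M x j) ∧
    (∀ p ∈ P, ¬ IsLeftEnd M p j) ∧ (∀ x, x ∉ P → ¬ IsRightEnd M x j)

/-- A right semi-clique column (symmetric to a left semi-clique column). -/
def IsRightSemiCol {V : Type} {k : ℕ} (P : Set V) (M : V → Fin k → Prop)
    (j : Fin k) : Prop :=
  (∃ p ∈ P, IsProperLeftEnd M p j) ∧ (∃ x, x ∉ P ∧ IsProperRightEnd M x j) ∧
    (∀ p ∈ P, ¬ IsRightEnd M p j) ∧ (∀ x, x ∉ P → ¬ IsLeftEnd M x j)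

/-- A semi-clique column: a left or right semi-clique column. -/
def IsSemiCol {V : Type} {k : ℕ} (P : Set V) (M : V → Fin k → Prop)
    (j : Fin k) : Prop :=
  IsLeftSemiCol P M j ∨ IsRightSemiCol P M j

/-- A simplicial column: not a clique column, its vertex set contains a simplicial
non-probe, and it contains no endpoint of a non-simplicial non-probe. -/
def IsSimpCol {V : Type} {k : ℕ} (G : SimpleGraph V) (P : Set V)
    (M : V → Fin k → Prop) (j : Fin k) : Prop :=
  ¬ IsCliqueCol G P M j ∧ (∃ x, SimpNonProbe G P x ∧ M x j) ∧
    ∀ x, x ∉ P → ¬ SimpNonProbe G P x → ¬ IsLeftEnd M x j ∧ ¬ IsRightEnd M x j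

/-- The probe set of the induced subgraph `G - N_S` on `V \ N_S`. -/
def probesPS {V : Type} (G : SimpleGraph V) (P : Set V) : Set ↥((setNS G P)ᶜ) :=
  {v | (v : V) ∈ P}

/-- The graph `G**` on `V \ N_S`: its edges are those of `G - N_S` together with the
pairs `x y` of non-probes such that `N(x) ∩ N(y)` equals a clique of `G[P]` or
contains two nonadjacent vertices. -/
def Gss {V : Type} (G : SimpleGraph V) (P : Set V) : SimpleGraph ↥((setNS G P)ᶜ) :=
  SimpleGraph.fromRel (fun u v =>
    G.Adj (u : V) (v : V) ∨
      ((u : V) ∉ P ∧ (v : V) ∉ P ∧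
        ((∃ K : Set V, IsMaxPClique G P K ∧
            G.neighborSet (u : V) ∩ G.neighborSet (v : V) = K) ∨
          (∃ a b : V, a ∈ G.neighborSet (u : V) ∩ G.neighborSet (v : V) ∧
            b ∈ G.neighborSet (u : V) ∩ G.neighborSet (v : V) ∧
            a ≠ b ∧ ¬ G.Adj a b))))

/-- `M` is a consecutive-ones ordered clique matrix of `H`: it has one column per
maximal clique of `H`, with a 1 in row `v` and column `K` exactly when `v ∈ K`, and
the 1's in every row are consecutive. -/
def IsC1CliqueMatrix {W : Type} (H : SimpleGraph W) {k : ℕ}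
    (M : W → Fin k → Prop) : Prop :=
  (∃ f : Fin k → Set W, Function.Injective f ∧
      (∀ j, IsMaxClique H (f j)) ∧ (∀ K, IsMaxClique H K → ∃ j, f j = K) ∧
      (∀ v j, M v j ↔ v ∈ f j)) ∧
    ∀ v : W, ConsecSet {j | M v j}

/-- A 0-1 matrix (with rows indexed by `R`) has the consecutive-ones property. -/
def HasC1P {R : Type} {n : ℕ} (M : R → Fin n → Prop) : Prop :=
  ∃ σ : Equiv.Perm (Fin n), ∀ r, ConsecSet {j | M r (σ j)}

/-- Two sets properly overlap. -/
def ProperOverlap {α : Type} (A B : Set α) : Prop :=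
  (A ∩ B).Nonempty ∧ (A \ B).Nonempty ∧ (B \ A).Nonempty

/-- Auxiliary: any probe interval model can be tightened to a taut one with the
same number of columns. -/
lemma exists_taut_model {V : Type} {k : ℕ} (G : SimpleGraph V) (P : Set V)
    (M : V → Fin k → Prop) (hM : IsPIModel G P M) :
    ∃ M2 : V → Fin k → Prop, IsPIModel G P M2 ∧ Taut P M2 := by
  classical
  obtain ⟨hrows, hrep⟩ := hM
  set S : V → Set ℕ := fun v => {n | ∃ h : n < k, M v ⟨n, h⟩} with hSdef
  have hSne : ∀ v, (S v).Nonempty := by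
    intro v
    obtain ⟨j, hj⟩ := (hrows v).1
    exact ⟨j.val, j.isLt, by simpa using hj⟩
  have hSbdd : ∀ v, BddAbove (S v) := fun v => ⟨k, fun n hn => le_of_lt hn.1⟩
  set a : V → ℕ := fun v => sInf (S v) with hadef
  set b : V → ℕ := fun v => sSup (S v) with hbdef
  have ha_mem : ∀ v, a v ∈ S v := fun v => Nat.sInf_mem (hSne v)
  have hb_mem : ∀ v, b v ∈ S v := fun v => Nat.sSup_mem (hSne v) (hSbdd v)
  have hb_lt : ∀ v, b v < k := fun v => (hb_mem v).1
  have hmem : ∀ v n, n ∈ S v ↔ a v ≤ n ∧ n ≤ b v := by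
    intro v n
    constructor
    · intro hn; exact ⟨Nat.sInf_le hn, le_csSup (hSbdd v) hn⟩
    · rintro ⟨h1, h2⟩
      have hnk : n < k := lt_of_le_of_lt h2 (hb_lt v)
      obtain ⟨hak, hMa⟩ := ha_mem v
      obtain ⟨hbk, hMb⟩ := hb_mem v
      exact ⟨hnk, (hrows v).2 ⟨a v, hak⟩ ⟨n, hnk⟩ ⟨b v, hbk⟩
        (by simpa [Fin.le_def] using h1) (by simpa [Fin.le_def] using h2) hMa hMb⟩
  have hov : ∀ u v, G.Adj u v → a u ≤ b v := by
    intro u v huv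
    obtain ⟨_, j, hju, hjv⟩ := (hrep u v huv.ne).mp huv
    have h1 : (j : ℕ) ∈ S u := ⟨j.isLt, by simpa using hju⟩
    have h2 : (j : ℕ) ∈ S v := ⟨j.isLt, by simpa using hjv⟩
    exact le_trans (Nat.sInf_le h1) (le_csSup (hSbdd v) h2)
  set A : V → ℕ := fun v => sInf (insert (b v) {n | ∃ u, G.Adj v u ∧ b u = n}) with hAdef
  have hA_le_b : ∀ v, A v ≤ b v := fun v => Nat.sInf_le (Set.mem_insert _ _)
  have hA_le : ∀ v u, G.Adj v u → A v ≤ b u := fun v u h =>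
    Nat.sInf_le (Set.mem_insert_iff.mpr (Or.inr ⟨u, h, rfl⟩))
  have hA_cases : ∀ v, A v = b v ∨ ∃ u, G.Adj v u ∧ b u = A v := by
    intro v
    have := Nat.sInf_mem (⟨b v, Set.mem_insert _ _⟩ :
      (insert (b v) {n | ∃ u, G.Adj v u ∧ b u = n}).Nonempty)
    rcases Set.mem_insert_iff.mp this with h | h
    · exact Or.inl h
    · exact Or.inr h
  have ha_le_A : ∀ v, a v ≤ A v := by
    intro v
    rcases hA_cases v with h | ⟨u, hu, h⟩
    · rw [h]; exact Nat.sInf_le (hb_mem v)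
    · exact h ▸ hov v u hu
  set B : V → ℕ := fun v => sSup (insert (A v) {n | ∃ u, G.Adj v u ∧ A u = n}) with hBdef
  have hBbdd : ∀ v, BddAbove (insert (A v) {n | ∃ u, G.Adj v u ∧ A u = n}) := by
    intro v
    refine ⟨b v, ?_⟩
    rintro n (rfl | ⟨u, hu, rfl⟩)
    · exact hA_le_b v
    · exact hA_le u v hu.symm
  have hA_le_B : ∀ v, A v ≤ B v := fun v => le_csSup (hBbdd v) (Set.mem_insert _ _)
  have hB_ge : ∀ v u, G.Adj v u → A u ≤ B v := fun v u h =>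
    le_csSup (hBbdd v) (Set.mem_insert_iff.mpr (Or.inr ⟨u, h, rfl⟩))
  have hB_cases : ∀ v, B v = A v ∨ ∃ u, G.Adj v u ∧ A u = B v := by
    intro v
    have := Nat.sSup_mem (⟨A v, Set.mem_insert _ _⟩ :
      (insert (A v) {n | ∃ u, G.Adj v u ∧ A u = n}).Nonempty) (hBbdd v)
    rcases Set.mem_insert_iff.mp this with h | h
    · exact Or.inl h
    · exact Or.inr h
  have hB_le_b : ∀ v, B v ≤ b v := by
    intro v
    rcases hB_cases v with h | ⟨u, hu, h⟩
    · rw [h]; exact hA_le_b v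
    · exact h ▸ hA_le u v hu.symm
  have hB_lt : ∀ v, B v < k := fun v => lt_of_le_of_lt (hB_le_b v) (hb_lt v)
  set M2 : V → Fin k → Prop := fun v j => A v ≤ j.val ∧ j.val ≤ B v with hM2def
  have hrows2 : RowsOK M2 := by
    intro v
    constructor
    · exact ⟨⟨A v, lt_of_le_of_lt (hA_le_B v) (hB_lt v)⟩, le_refl _, hA_le_B v⟩
    · intro i j l hij hjl hi hl
      exact ⟨le_trans hi.1 (Fin.le_def.mp hij), le_trans (Fin.le_def.mp hjl) hl.2⟩
  have hrep2 : Represents G P M2 := by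
    intro u v huv
    constructor
    · intro hadj
      obtain ⟨hp, _⟩ := (hrep u v huv).mp hadj
      have hmu : max (A u) (A v) ≤ B u := max_le (hA_le_B u) (hB_ge u v hadj)
      have hmv : max (A u) (A v) ≤ B v := max_le (hB_ge v u hadj.symm) (hA_le_B v)
      exact ⟨hp, ⟨max (A u) (A v), lt_of_le_of_lt hmu (hB_lt u)⟩,
        ⟨le_max_left _ _, hmu⟩, ⟨le_max_right _ _, hmv⟩⟩
    · rintro ⟨hp, j, hju, hjv⟩
      have h1 : M u j := by
        obtain ⟨h, hMh⟩ := (hmem u j.val).mpr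
          ⟨le_trans (ha_le_A u) hju.1, le_trans hju.2 (hB_le_b u)⟩
        simpa using hMh
      have h2 : M v j := by
        obtain ⟨h, hMh⟩ := (hmem v j.val).mpr
          ⟨le_trans (ha_le_A v) hjv.1, le_trans hjv.2 (hB_le_b v)⟩
        simpa using hMh
      exact (hrep u v huv).mpr ⟨hp, j, h1, h2⟩
  refine ⟨M2, ⟨hrows2, hrep2⟩, ?_⟩
  intro v M' hcon heq
  obtain ⟨c, hend, hM'⟩ := hcon
  rcases hend with ⟨⟨hcmem, hmin⟩, j0, hj0, hj0c⟩ | ⟨⟨hcmem, hmax⟩, j0, hj0, hj0c⟩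
  · -- left end: c.val = A v
    have hcval : (c : ℕ) = A v := by
      have h1 : c ≤ (⟨A v, lt_of_le_of_lt (hA_le_B v) (hB_lt v)⟩ : Fin k) :=
        hmin _ ⟨le_refl _, hA_le_B v⟩
      exact le_antisymm (Fin.le_def.mp h1) hcmem.1
    have hlt : A v < B v := by
      have hne : (j0 : ℕ) ≠ A v := fun h => hj0c (Fin.ext (h.trans hcval.symm))
      have := hj0.1
      have := hj0.2
      omega
    rcases hA_cases v with h | ⟨u, hu, hub⟩
    · have := hB_le_b v; omega
    · have hBu : B u ≤ A v := hub ▸ hB_le_b u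
      have hne : u ≠ v := hu.ne'
      have h2 : RepAdj P M2 u v := by
        obtain ⟨hp, hov2⟩ := (hrep2 u v hne).mp hu.symm
        exact ⟨hne, hp, hov2⟩
      have h1 : ¬ RepAdj P M' u v := by
        rintro ⟨_, _, j, hju, hjv⟩
        rw [hM' u j] at hju
        rw [hM' v j] at hjv
        have hjc : j ≠ c := fun h => hjv.2 ⟨rfl, h⟩
        have hjA : (j : ℕ) ≠ A v := fun h => hjc (Fin.ext (h.trans hcval.symm))
        have := hjv.1.1
        have := hju.1.2
        omega
      rw [heq] at h1
      exact h1 h2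
  · -- right end: c.val = B v
    have hcval : (c : ℕ) = B v := by
      have h1 : (⟨B v, hB_lt v⟩ : Fin k) ≤ c := hmax _ ⟨hA_le_B v, le_refl _⟩
      exact le_antisymm hcmem.2 (Fin.le_def.mp h1)
    have hlt : A v < B v := by
      have hne : (j0 : ℕ) ≠ B v := fun h => hj0c (Fin.ext (h.trans hcval.symm))
      have := hj0.1
      have := hj0.2
      omega
    rcases hB_cases v with h | ⟨u, hu, hub⟩
    · omega
    · have hAu : B v ≤ A u := hub.ge
      have hne : u ≠ v := hu.ne'
      have h2 : RepAdj P M2 u v := by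
        obtain ⟨hp, hov2⟩ := (hrep2 u v hne).mp hu.symm
        exact ⟨hne, hp, hov2⟩
      have h1 : ¬ RepAdj P M' u v := by
        rintro ⟨_, _, j, hju, hjv⟩
        rw [hM' u j] at hju
        rw [hM' v j] at hjv
        have hjc : j ≠ c := fun h => hjv.2 ⟨rfl, h⟩
        have hjB : (j : ℕ) ≠ B v := fun h => hjc (Fin.ext (h.trans hcval.symm))
        have := hjv.1.2
        have := hju.1.1
        omega
      rw [heq] at h1
      exact h1 h2

/-- Every graph `G` whose vertex set is partitioned into a set `P` of
probes and an independent set of non-probes and which admits a probe interval model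
also admits a normal probe interval model. -/
theorem stmt0 {V : Type} (G : SimpleGraph V) (P : Set V)
    (hIndep : ∀ u v : V, u ∉ P → v ∉ P → ¬ G.Adj u v)
    (hPIG : IsPIGraph G P) :
    ∃ (k : ℕ) (M : V → Fin k → Prop), IsNormalModel G P M := by
  classical
  have hex : ∃ k : ℕ, ∃ M : V → Fin k → Prop, IsPIModel G P M := hPIG
  obtain ⟨M, hM⟩ := Nat.find_spec hex
  obtain ⟨M2, hPI2, hT2⟩ := exists_taut_model G P M hM
  refine ⟨Nat.find hex, M2, hPI2, hT2, ?_⟩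
  rintro i ⟨hi, hmerge⟩
  have hQ : ∃ M' : V → Fin (Nat.find hex - 1) → Prop, IsPIModel G P M' :=
    ⟨mergeCols M2 i, hmerge⟩
  have hle := Nat.find_min' hex hQ
  omega
end

section
/- In every normal probe interval model of a connected probe interval graph with more than one vertex, every column has at least one probe in its vertex set. -/
open Set

lemma Mcast {V : Type} {k : ℕ} (M : V → Fin k → Prop) {v : V} {a b : Fin k}
    (h : M v a) (hab : a.val = b.val) : M v b := by
  have : a = b := Fin.ext hab
  rwa [this] at h

lemma merge_mem_iff {V : Type} {k : ℕ} (M : V → Fin k → Prop) (i : ℕ) (hi : i + 1 < k)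
    (v : V) (t : Fin (k - 1)) :
    mergeCols M i v t ↔
      (t.val ≤ i ∧ M v ⟨t.val, by have := t.isLt; omega⟩) ∨
      (i ≤ t.val ∧ M v ⟨t.val + 1, by have := t.isLt; omega⟩) := by
  unfold mergeCols
  split_ifs with h1 h2
  · constructor
    · intro h; exact Or.inl ⟨by first | omega | (simp only [Fin.val_mk]; omega), h⟩
    · rintro (⟨_, h⟩ | ⟨h2, _⟩)
      · exact h
      · omega
  · constructor
    · rintro (h | h)
      · exact Or.inl ⟨by first | omega | (simp only [Fin.val_mk]; omega), Mcast M h (by first | omega | (simp only [Fin.val_mk]; omega))⟩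
      · exact Or.inr ⟨by first | omega | (simp only [Fin.val_mk]; omega), Mcast M h (by first | omega | (simp only [Fin.val_mk]; omega))⟩
    · rintro (⟨_, h⟩ | ⟨_, h⟩)
      · exact Or.inl (Mcast M h (by first | omega | (simp only [Fin.val_mk]; omega)))
      · exact Or.inr (Mcast M h (by first | omega | (simp only [Fin.val_mk]; omega)))
  · constructor
    · intro h; exact Or.inr ⟨by first | omega | (simp only [Fin.val_mk]; omega), Mcast M h (by first | omega | (simp only [Fin.val_mk]; omega))⟩
    · rintro (⟨h, _⟩ | ⟨_, h⟩)
      · omega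
      · exact Mcast M h (by first | omega | (simp only [Fin.val_mk]; omega))

lemma mergeOK {V : Type} {k : ℕ} (G : SimpleGraph V) (P : Set V)
    (M : V → Fin k → Prop) (hRows : RowsOK M) (hRep : Represents G P M)
    (i : ℕ) (hi : i + 1 < k)
    (hsub : (∀ v, M v ⟨i, by first | omega | (simp only [Fin.val_mk]; omega)⟩ → M v ⟨i + 1, hi⟩) ∨
            (∀ v, M v ⟨i + 1, hi⟩ → M v ⟨i, by first | omega | (simp only [Fin.val_mk]; omega)⟩)) :
    IsPIModel G P (mergeCols M i) := by
  constructor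
  · intro v
    obtain ⟨⟨s, hs⟩, hcons⟩ := hRows v
    have hs' : M v s := hs
    constructor
    · by_cases hsi : s.val ≤ i
      · exact ⟨⟨s.val, by first | omega | (simp only [Fin.val_mk]; omega)⟩,
          (merge_mem_iff M i hi v _).mpr (Or.inl ⟨hsi, Mcast M hs' rfl⟩)⟩
      · exact ⟨⟨s.val - 1, by have := s.isLt; omega⟩,
          (merge_mem_iff M i hi v _).mpr (Or.inr ⟨by first | omega | (simp only [Fin.val_mk]; omega), Mcast M hs' (by first | omega | (simp only [Fin.val_mk]; omega))⟩)⟩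
    · intro a b c hab hbc ha hc
      have hab' : a.val ≤ b.val := hab
      have hbc' : b.val ≤ c.val := hbc
      have hak := a.isLt
      have hbk := b.isLt
      have hck := c.isLt
      have hcons' : ∀ (x y z : Fin k), x.val ≤ y.val → y.val ≤ z.val →
          M v x → M v z → M v y := fun x y z h1 h2 hx hz => hcons x y z h1 h2 hx hz
      have ha' := (merge_mem_iff M i hi v a).mp ha
      have hc' := (merge_mem_iff M i hi v c).mp hc
      refine (merge_mem_iff M i hi v b).mpr ?_
      rcases ha' with ⟨ha1, ha2⟩ | ⟨ha1, ha2⟩ <;> rcases hc' with ⟨hc1, hc2⟩ | ⟨hc1, hc2⟩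
      · exact Or.inl ⟨by first | omega | (simp only [Fin.val_mk]; omega), hcons' ⟨a.val, by first | omega | (simp only [Fin.val_mk]; omega)⟩ ⟨b.val, by first | omega | (simp only [Fin.val_mk]; omega)⟩
          ⟨c.val, by first | omega | (simp only [Fin.val_mk]; omega)⟩ (by first | omega | (simp only [Fin.val_mk]; omega)) (by first | omega | (simp only [Fin.val_mk]; omega)) ha2 hc2⟩
      · by_cases hbi : b.val ≤ i
        · exact Or.inl ⟨hbi, hcons' ⟨a.val, by first | omega | (simp only [Fin.val_mk]; omega)⟩ ⟨b.val, by first | omega | (simp only [Fin.val_mk]; omega)⟩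
            ⟨c.val + 1, by first | omega | (simp only [Fin.val_mk]; omega)⟩ (by first | omega | (simp only [Fin.val_mk]; omega)) (by first | omega | (simp only [Fin.val_mk]; omega)) ha2 hc2⟩
        · exact Or.inr ⟨by first | omega | (simp only [Fin.val_mk]; omega), hcons' ⟨a.val, by first | omega | (simp only [Fin.val_mk]; omega)⟩ ⟨b.val + 1, by first | omega | (simp only [Fin.val_mk]; omega)⟩
            ⟨c.val + 1, by first | omega | (simp only [Fin.val_mk]; omega)⟩ (by first | omega | (simp only [Fin.val_mk]; omega)) (by first | omega | (simp only [Fin.val_mk]; omega)) ha2 hc2⟩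
      · exact Or.inr ⟨by first | omega | (simp only [Fin.val_mk]; omega), Mcast M ha2 (by first | omega | (simp only [Fin.val_mk]; omega))⟩
      · exact Or.inr ⟨by first | omega | (simp only [Fin.val_mk]; omega), hcons' ⟨a.val + 1, by first | omega | (simp only [Fin.val_mk]; omega)⟩ ⟨b.val + 1, by first | omega | (simp only [Fin.val_mk]; omega)⟩
          ⟨c.val + 1, by first | omega | (simp only [Fin.val_mk]; omega)⟩ (by first | omega | (simp only [Fin.val_mk]; omega)) (by first | omega | (simp only [Fin.val_mk]; omega)) ha2 hc2⟩
  · intro u v huv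
    rw [hRep u v huv]
    constructor
    · rintro ⟨hP, s, hu, hv⟩
      refine ⟨hP, ?_⟩
      by_cases hsi : s.val ≤ i
      · exact ⟨⟨s.val, by first | omega | (simp only [Fin.val_mk]; omega)⟩,
          (merge_mem_iff M i hi u _).mpr (Or.inl ⟨hsi, Mcast M hu rfl⟩),
          (merge_mem_iff M i hi v _).mpr (Or.inl ⟨hsi, Mcast M hv rfl⟩)⟩
      · exact ⟨⟨s.val - 1, by have := s.isLt; omega⟩,
          (merge_mem_iff M i hi u _).mpr (Or.inr ⟨by first | omega | (simp only [Fin.val_mk]; omega), Mcast M hu (by first | omega | (simp only [Fin.val_mk]; omega))⟩),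
          (merge_mem_iff M i hi v _).mpr (Or.inr ⟨by first | omega | (simp only [Fin.val_mk]; omega), Mcast M hv (by first | omega | (simp only [Fin.val_mk]; omega))⟩)⟩
    · rintro ⟨hP, t, hu, hv⟩
      refine ⟨hP, ?_⟩
      rw [merge_mem_iff M i hi] at hu hv
      rcases hu with ⟨hu1, hu2⟩ | ⟨hu1, hu2⟩ <;> rcases hv with ⟨hv1, hv2⟩ | ⟨hv1, hv2⟩
      · exact ⟨_, hu2, hv2⟩
      · have ht : t.val = i := le_antisymm hu1 hv1
        rcases hsub with hs | hs
        · exact ⟨⟨i + 1, hi⟩, hs u (Mcast M hu2 ht), Mcast M hv2 (by first | omega | (simp only [Fin.val_mk]; omega))⟩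
        · exact ⟨⟨i, by first | omega | (simp only [Fin.val_mk]; omega)⟩, Mcast M hu2 ht, hs v (Mcast M hv2 (by first | omega | (simp only [Fin.val_mk]; omega)))⟩
      · have ht : t.val = i := le_antisymm hv1 hu1
        rcases hsub with hs | hs
        · exact ⟨⟨i + 1, hi⟩, Mcast M hu2 (by first | omega | (simp only [Fin.val_mk]; omega)), hs v (Mcast M hv2 ht)⟩
        · exact ⟨⟨i, by first | omega | (simp only [Fin.val_mk]; omega)⟩, hs u (Mcast M hu2 (by first | omega | (simp only [Fin.val_mk]; omega))), Mcast M hv2 ht⟩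
      · exact ⟨_, hu2, hv2⟩

/-- In every normal probe interval model of a connected probe interval
graph with more than one vertex, every column has at least one probe in its vertex set. -/
theorem stmt1 {V : Type} [Fintype V] (G : SimpleGraph V) (P : Set V)
    (hIndep : ∀ u v : V, u ∉ P → v ∉ P → ¬ G.Adj u v)
    (hConn : G.Connected) (hcard : 1 < Fintype.card V)
    {k : ℕ} (M : V → Fin k → Prop) (hM : IsNormalModel G P M) :
    ∀ j : Fin k, ∃ p, p ∈ P ∧ M p j := by
  obtain ⟨⟨hRows, hRep⟩, hTaut, hMin⟩ := hM
  intro j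
  by_contra hNo
  push_neg at hNo
  have hNoP : ∀ v, M v j → v ∉ P := fun v hv hvP => hNo v hvP hv
  by_cases hA : ∃ x, M x j ∧ (IsProperLeftEnd M x j ∨ IsProperRightEnd M x j)
  · obtain ⟨x, hxj, hEnd⟩ := hA
    refine hTaut x (fun u t => M u t ∧ ¬(u = x ∧ t = j)) ⟨j, hEnd, fun _ _ => Iff.rfl⟩ ?_
    funext u v
    refine propext ⟨?_, ?_⟩
    · rintro ⟨hne, hP, t, ⟨hu, _⟩, ⟨hv, _⟩⟩; exact ⟨hne, hP, t, hu, hv⟩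
    · rintro ⟨hne, hP, t, hu, hv⟩
      refine ⟨hne, hP, t, ⟨hu, ?_⟩, ⟨hv, ?_⟩⟩
      · rintro ⟨rfl, rfl⟩
        rcases hP with h | h
        · exact hNoP _ hu h
        · exact hNoP _ hv h
      · rintro ⟨rfl, rfl⟩
        rcases hP with h | h
        · exact hNoP _ hu h
        · exact hNoP _ hv h
  by_cases hB : ∃ x, M x j ∧ ∀ t, M x t → t = j
  · obtain ⟨x, hxj, hOnly⟩ := hB
    obtain ⟨y, hy⟩ : ∃ y, y ≠ x := Fintype.exists_ne_of_one_lt_card hcard x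
    obtain ⟨w⟩ := hConn.preconnected x y
    have hadj : ∃ z, G.Adj x z := by
      cases w with
      | nil => exact absurd rfl hy
      | cons h _ => exact ⟨_, h⟩
    obtain ⟨z, hxz⟩ := hadj
    obtain ⟨hP, s, hxs, hzs⟩ := (hRep x z (G.ne_of_adj hxz)).mp hxz
    have hsj := hOnly s hxs
    rcases hP with h | h
    · exact hNoP x hxj h
    · exact hNoP z (hsj ▸ hzs) h
  push_neg at hA hB
  have hgt : ∀ x, M x j → ∃ t : Fin k, M x t ∧ j < t := by
    intro x hx
    by_contra h
    push_neg at h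
    obtain ⟨t, hxt, htj⟩ := hB x hx
    exact (hA x hx).2 ⟨⟨hx, fun s hs => h s hs⟩, t, hxt, htj⟩
  by_cases hCol : ∃ x, M x j
  · obtain ⟨x0, hx0⟩ := hCol
    obtain ⟨t0, _, ht0⟩ := hgt x0 hx0
    have hjk : j.val + 1 < k := by
      have h1 := t0.isLt
      have h2 : j.val < t0.val := ht0
      omega
    refine hMin j.val ⟨hjk, mergeOK G P M hRows hRep j.val hjk (Or.inl ?_)⟩
    intro v hv
    have hvj : M v j := hv
    obtain ⟨t, hvt, hjt⟩ := hgt v hvj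
    have hjt' : j.val < t.val := hjt
    exact (hRows v).2 j ⟨j.val + 1, hjk⟩ t (by first | omega | (simp only [Fin.val_mk]; omega) : j.val ≤ j.val + 1)
      (by first | omega | (simp only [Fin.val_mk]; omega) : j.val + 1 ≤ t.val) hvj hvt
  · push_neg at hCol
    by_cases hjk : j.val + 1 < k
    · exact hMin j.val ⟨hjk, mergeOK G P M hRows hRep j.val hjk
        (Or.inl fun v hv => absurd hv (hCol v))⟩
    · by_cases hj0 : j.val = 0
      · have hne : Nonempty V := Fintype.card_pos_iff.mp (by first | omega | (simp only [Fin.val_mk]; omega))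
        obtain ⟨v⟩ := hne
        obtain ⟨t, ht⟩ := (hRows v).1
        have hjlt := j.isLt
        have htlt := t.isLt
        have : t = j := Fin.ext (by first | omega | (simp only [Fin.val_mk]; omega))
        exact hCol v (this ▸ ht)
      · have hjlt := j.isLt
        have hik : (j.val - 1) + 1 < k := by first | omega | (simp only [Fin.val_mk]; omega)
        refine hMin (j.val - 1) ⟨hik, mergeOK G P M hRows hRep (j.val - 1) hik (Or.inr ?_)⟩
        intro v hv
        exact absurd (Mcast M hv (by first | omega | (simp only [Fin.val_mk]; omega))) (hCol v)
end

section
/- In every normal probe interval model of a connected probe interval graph, a non-probe x has a 1 in exactly one column if and only if x is simplicial. -/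
open Set

/-- From tautness: contracting row `x` at a proper endpoint `c` changes the
represented adjacencies, so there is a probe `u` meeting `x` only at column `c`. -/
lemma extract_endpoint {V : Type} {k : ℕ} (P : Set V) (M : V → Fin k → Prop)
    (x : V) (hx : x ∉ P) (c : Fin k)
    (hend : IsProperLeftEnd M x c ∨ IsProperRightEnd M x c)
    (htaut : TautRow P M x) :
    ∃ u, u ∈ P ∧ u ≠ x ∧ M u c ∧ ∀ j, M u j → M x j → j = c := by
  set M' : V → Fin k → Prop := fun u j => M u j ∧ ¬(u = x ∧ j = c) with hM'
  have hcon : Contraction M M' x := ⟨c, hend, fun u j => Iff.rfl⟩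
  have hne := htaut M' hcon
  rw [Function.ne_iff] at hne; obtain ⟨a, hne⟩ := hne
  rw [Function.ne_iff] at hne; obtain ⟨b, hne⟩ := hne
  have himp : RepAdj P M' a b → RepAdj P M a b := by
    rintro ⟨h1, h2, j, hj1, hj2⟩; exact ⟨h1, h2, j, hj1.1, hj2.1⟩
  have hmain : RepAdj P M a b ∧ ¬ RepAdj P M' a b := by
    have hniff : ¬ (RepAdj P M' a b ↔ RepAdj P M a b) := fun h => hne (propext h)
    tauto
  obtain ⟨⟨hab, hPab, j0, hj0a, hj0b⟩, hnr⟩ := hmain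
  by_cases ha : a = x
  · have hbx : b ≠ x := fun h => hab (ha.trans h.symm)
    have hbP : b ∈ P := by
      rcases hPab with h | h
      · exact absurd (ha ▸ h) hx
      · exact h
    have hkey : ∀ j, M b j → M x j → j = c := by
      intro j hbj hxj
      by_contra hjc
      exact hnr ⟨hab, hPab, j, ⟨ha ▸ hxj, fun h => hjc h.2⟩, ⟨hbj, fun h => hbx h.1⟩⟩
    have hbc : M b c := (hkey j0 hj0b (ha ▸ hj0a)) ▸ hj0b
    exact ⟨b, hbP, hbx, hbc, hkey⟩
  · by_cases hb : b = x
    · have haP : a ∈ P := by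
        rcases hPab with h | h
        · exact h
        · exact absurd (hb ▸ h) hx
      have hkey : ∀ j, M a j → M x j → j = c := by
        intro j haj hxj
        by_contra hjc
        exact hnr ⟨hab, hPab, j, ⟨haj, fun h => ha h.1⟩, ⟨hb ▸ hxj, fun h => hjc h.2⟩⟩
      have hac : M a c := (hkey j0 hj0a (hb ▸ hj0b)) ▸ hj0a
      exact ⟨a, haP, ha, hac, hkey⟩
    · exact absurd ⟨hab, hPab, j0, ⟨hj0a, fun h => ha h.1⟩, ⟨hj0b, fun h => hb h.1⟩⟩ hnr

/-- In every normal probe interval model of a connected probe interval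
graph, a non-probe `x` has a 1 in exactly one column iff `x` is simplicial. -/
theorem stmt2 {V : Type} (G : SimpleGraph V) (P : Set V)
    (hIndep : ∀ u v : V, u ∉ P → v ∉ P → ¬ G.Adj u v)
    (hConn : G.Connected)
    {k : ℕ} (M : V → Fin k → Prop) (hM : IsNormalModel G P M)
    (x : V) (hx : x ∉ P) :
    (∃! j : Fin k, M x j) ↔ G.IsClique (G.neighborSet x) := by
  obtain ⟨⟨hrows, hrep⟩, htaut, hmin⟩ := hM
  constructor
  · rintro ⟨j₀, hj₀, huniq⟩
    rw [SimpleGraph.isClique_iff]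
    intro u hu v hv huv
    rw [SimpleGraph.mem_neighborSet] at hu hv
    obtain ⟨hPu, ju, hxju, huju⟩ := (hrep x u hu.ne).mp hu
    obtain ⟨hPv, jv, hxjv, hvjv⟩ := (hrep x v hv.ne).mp hv
    have huP : u ∈ P := by rcases hPu with h | h; exact absurd h hx; exact h
    have hu0 : M u j₀ := (huniq ju hxju) ▸ huju
    have hv0 : M v j₀ := (huniq jv hxjv) ▸ hvjv
    exact (hrep u v huv).mpr ⟨Or.inl huP, j₀, hu0, hv0⟩
  · intro hsimp
    obtain ⟨hnex, hconsx⟩ := hrows x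
    obtain ⟨c, hc, hcmin⟩ := Set.exists_min_image {j | M x j} id (Set.toFinite _) hnex
    obtain ⟨d, hd, hdmax⟩ := Set.exists_max_image {j | M x j} id (Set.toFinite _) hnex
    have hcd : c ≤ d := hcmin d hd
    rcases eq_or_lt_of_le hcd with heq | hlt
    · exact ⟨c, hc, fun j hj => le_antisymm (heq ▸ hdmax j hj) (hcmin j hj)⟩
    · exfalso
      obtain ⟨u, huP, hux, huc, hukey⟩ := extract_endpoint P M x hx c
        (Or.inl ⟨⟨hc, hcmin⟩, ⟨d, hd, ne_of_gt hlt⟩⟩) (htaut x)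
      obtain ⟨v, hvP, hvx, hvd, hvkey⟩ := extract_endpoint P M x hx d
        (Or.inr ⟨⟨hd, hdmax⟩, ⟨c, hc, ne_of_lt hlt⟩⟩) (htaut x)
      have huv : u ≠ v := by
        rintro rfl
        exact absurd (hukey d hvd hd) (ne_of_gt hlt)
      have hadjxu : G.Adj x u := (hrep x u (Ne.symm hux)).mpr ⟨Or.inr huP, c, hc, huc⟩
      have hadjxv : G.Adj x v := (hrep x v (Ne.symm hvx)).mpr ⟨Or.inr hvP, d, hd, hvd⟩
      have hadjuv : G.Adj u v := hsimp hadjxu hadjxv huv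
      obtain ⟨_, j, huj, hvj⟩ := (hrep u v huv).mp hadjuv
      obtain ⟨_, hconsu⟩ := hrows u
      obtain ⟨_, hconsv⟩ := hrows v
      have hjc : j ≤ c := by
        by_contra h
        push_neg at h
        rcases le_or_gt j d with h2 | h2
        · have hxj : M x j := hconsx c j d (le_of_lt h) h2 hc hd
          exact absurd (hukey j huj hxj) (ne_of_gt h)
        · have hud : M u d := hconsu c d j hcd (le_of_lt h2) huc huj
          exact absurd (hukey d hud hd) (ne_of_gt hlt)
      have hdj : d ≤ j := by
        by_contra h
        push_neg at h
        rcases le_or_gt c j with h2 | h2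
        · have hxj : M x j := hconsx c j d h2 (le_of_lt h) hc hd
          exact absurd (hvkey j hvj hxj) (ne_of_lt h)
        · have hvc : M v c := hconsv j c d (le_of_lt h2) hcd hvj hvd
          exact absurd (hvkey c hvc hc) (ne_of_lt hlt)
      exact absurd (le_trans hdj hjc) (not_le.mpr hlt)
end

section
/- In every normal probe interval model of a connected probe interval graph G, each clique of G[P] is contained in the vertex set of exactly one column. -/
open Set

lemma merge_iff {V : Type} {k : ℕ} (M : V → Fin k → Prop) (i : ℕ) (hi : i + 1 < k)
    (v : V) (c : Fin (k - 1)) :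
    mergeCols M i v c ↔
      ∃ d : Fin k, M v d ∧ (if d.val ≤ i then d.val else d.val - 1) = c.val := by
  have hc := c.isLt
  unfold mergeCols
  split_ifs with h1 h2
  · constructor
    · intro h
      exact ⟨⟨c.val, by omega⟩, h, by simp; omega⟩
    · rintro ⟨d, hd, hfd⟩
      have hdc : d.val = c.val := by split_ifs at hfd <;> omega
      have : (⟨c.val, by omega⟩ : Fin k) = d := Fin.ext hdc.symm
      rwa [this]
  · constructor
    · rintro (h | h)
      · exact ⟨⟨i, by omega⟩, h, by simp; omega⟩
      · exact ⟨⟨i + 1, by omega⟩, h, by simp; omega⟩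
    · rintro ⟨d, hd, hfd⟩
      have : d.val = i ∨ d.val = i + 1 := by split_ifs at hfd <;> omega
      rcases this with h | h
      · left
        have : (⟨i, by omega⟩ : Fin k) = d := Fin.ext h.symm
        rwa [this]
      · right
        have : (⟨i + 1, by omega⟩ : Fin k) = d := Fin.ext h.symm
        rwa [this]
  · constructor
    · intro h
      exact ⟨⟨c.val + 1, by omega⟩, h, by simp; omega⟩
    · rintro ⟨d, hd, hfd⟩
      have hdc : d.val = c.val + 1 := by split_ifs at hfd <;> omega
      have : (⟨c.val + 1, by omega⟩ : Fin k) = d := Fin.ext hdc.symm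
      rwa [this]

lemma rowsOK_merge {V : Type} {k : ℕ} {M : V → Fin k → Prop} (hR : RowsOK M)
    (i : ℕ) (hi : i + 1 < k) : RowsOK (mergeCols M i) := by
  intro v
  obtain ⟨⟨d0, hd0⟩, hcons⟩ := hR v
  have hd0k := d0.isLt
  constructor
  · refine ⟨⟨if d0.val ≤ i then d0.val else d0.val - 1, by split_ifs <;> omega⟩, ?_⟩
    show mergeCols M i v _
    rw [merge_iff M i hi]
    exact ⟨d0, hd0, rfl⟩
  · intro c1 c2 c3 h12 h23 hc1 hc3
    simp only [mem_setOf_eq] at *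
    rw [merge_iff M i hi] at hc1 hc3 ⊢
    obtain ⟨a, ha, hfa⟩ := hc1
    obtain ⟨b, hb, hfb⟩ := hc3
    have hA := a.isLt; have hB := b.isLt; have hC := c2.isLt
    have h12' : c1.val ≤ c2.val := h12
    have h23' : c2.val ≤ c3.val := h23
    set d : ℕ := if c2.val < i then c2.val
      else if c2.val + 1 ≤ max a.val b.val then c2.val + 1 else c2.val with hd
    have hdk : d < k := by rw [hd]; split_ifs <;> omega
    have hrange : min a.val b.val ≤ d ∧ d ≤ max a.val b.val ∧
        (if d ≤ i then d else d - 1) = c2.val := by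
      rw [hd]
      split_ifs at hfa hfb ⊢ <;> omega
    obtain ⟨h1, h2, h3⟩ := hrange
    refine ⟨⟨d, hdk⟩, ?_, h3⟩
    rcases le_total a b with hab | hab
    · have hab' : a.val ≤ b.val := hab
      exact hcons a ⟨d, hdk⟩ b (by simp [Fin.le_def]; omega)
        (by simp [Fin.le_def]; omega) ha hb
    · have hab' : b.val ≤ a.val := hab
      exact hcons b ⟨d, hdk⟩ a (by simp [Fin.le_def]; omega)
        (by simp [Fin.le_def]; omega) hb ha

/-- Key step: a probe adjacent to all of a maximal P-clique must belong to it. -/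
lemma extend_clique {V : Type} {k : ℕ} {G : SimpleGraph V} {P : Set V}
    {M : V → Fin k → Prop} (hRep : Represents G P M) {K : Set V}
    (hK : IsMaxPClique G P K) {p : V} (hp : p ∈ P) {c : Fin k}
    (hKc : K ⊆ colVerts M c) (hpc : M p c) (hpK : p ∉ K) : False := by
  obtain ⟨⟨hKP, hKadj⟩, hKmax⟩ := hK
  have hins : (insert p K).Pairwise G.Adj := by
    haveI : Std.Symm G.Adj := ⟨fun _ _ h => h.symm⟩; rw [Set.pairwise_insert_of_symm]
    refine ⟨hKadj, fun b hb hne => ?_⟩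
    exact (hRep p b hne).mpr ⟨Or.inl hp, c, hpc, hKc hb⟩
  have := hKmax (insert p K) (Set.insert_subset hp hKP) hins (Set.subset_insert p K)
  exact hpK (this ▸ Set.mem_insert p K)

/-- In every normal probe interval model of a connected probe interval
graph `G`, each clique of `G[P]` is contained in the vertex set of exactly one column. -/
theorem stmt3 {V : Type} (G : SimpleGraph V) (P : Set V)
    (hIndep : ∀ u v : V, u ∉ P → v ∉ P → ¬ G.Adj u v)
    (hConn : G.Connected)
    {k : ℕ} (M : V → Fin k → Prop) (hM : IsNormalModel G P M) :
    ∀ K : Set V, IsMaxPClique G P K → ∃! j : Fin k, K ⊆ colVerts M j := by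
  obtain ⟨⟨hRows, hRep⟩, hTaut, hMin⟩ := hM
  intro K hK
  -- existence
  have hex : ∃ j : Fin k, K ⊆ colVerts M j := by
    rcases K.eq_empty_or_nonempty with rfl | ⟨w0, hw0⟩
    · obtain ⟨v⟩ := hConn.nonempty
      obtain ⟨⟨j, _⟩, -⟩ := hRows v
      exact ⟨j, by simp⟩
    · -- Helly property: take the largest left endpoint over K
      classical
      have hne : (Fin k) → True := fun _ => trivial
      -- left endpoint of a row
      have hLE : ∀ w : V, ∃ c : Fin k, M w c ∧ ∀ d, M w d → c ≤ d := by
        intro w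
        obtain ⟨hne', hcons⟩ := hRows w
        obtain ⟨c, hc, hcmin⟩ := Set.exists_min_image {j | M w j} id
          (Set.toFinite _) hne'
        exact ⟨c, hc, fun d hd => hcmin d hd⟩
      choose ℓ hℓmem hℓmin using hLE
      -- maximum of left endpoints over K
      obtain ⟨c, hcK, hcmax⟩ := Set.exists_max_image (ℓ '' K) id
        (Set.toFinite _) ⟨ℓ w0, Set.mem_image_of_mem ℓ hw0⟩
      obtain ⟨w1, hw1, rfl⟩ := hcK
      refine ⟨ℓ w1, fun w hw => ?_⟩
      by_cases hww : w = w1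
      · subst hww; exact hℓmem w
      · have hadj : G.Adj w w1 := hK.1.2 hw hw1 hww
        obtain ⟨-, d, hwd, hw1d⟩ := (hRep w w1 hww).mp hadj
        have h1 : ℓ w ≤ ℓ w1 := hcmax (ℓ w) (Set.mem_image_of_mem ℓ hw)
        have h2 : ℓ w1 ≤ d := hℓmin w1 d hw1d
        exact (hRows w).2 (ℓ w) (ℓ w1) d h1 h2 (hℓmem w) hwd
  obtain ⟨j, hj⟩ := hex
  -- uniqueness: no maximal P-clique fits in two distinct columns
  have key : ∀ a b : Fin k, a < b → K ⊆ colVerts M a → K ⊆ colVerts M b → False := by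
    intro a b hab hKa hKb
    have hA := a.isLt; have hB := b.isLt
    have hab' : a.val < b.val := hab
    have hik : a.val + 1 < k := by omega
    set i := a.val with hi
    have hKa1 : K ⊆ colVerts M ⟨i + 1, hik⟩ := by
      intro w hw
      exact (hRows w).2 a ⟨i + 1, hik⟩ b (by simp [Fin.le_def]; omega)
        (by simp [Fin.le_def]; omega) (hKa hw) (hKb hw)
    have hKa0 : K ⊆ colVerts M ⟨i, by omega⟩ := by
      have : (⟨i, by omega⟩ : Fin k) = a := Fin.ext rfl
      rwa [this]
    -- inner step
    have inner : ∀ u v : V, u ≠ v → ¬ G.Adj u v → (u ∈ P ∨ v ∈ P) →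
        M u ⟨i, by omega⟩ → M v ⟨i + 1, hik⟩ → False := by
      intro u v huv hAdj hPor hu hv
      rcases hPor with hp | hp
      · by_cases hu1 : M u ⟨i + 1, hik⟩
        · exact hAdj ((hRep u v huv).mpr ⟨Or.inl hp, ⟨i + 1, hik⟩, hu1, hv⟩)
        · have huK : u ∉ K := fun h => hu1 (hKa1 h)
          exact extend_clique hRep hK hp hKa0 hu huK
      · by_cases hv0 : M v ⟨i, by omega⟩
        · exact hAdj ((hRep u v huv).mpr ⟨Or.inr hp, ⟨i, by omega⟩, hu, hv0⟩)
        · have hvK : v ∉ K := fun h => hv0 (hKa0 h)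
          exact extend_clique hRep hK hp hKa1 hv hvK
    -- minimality at column i gives a non-edge forced by merging
    have hnm := hMin i
    rw [CanMerge] at hnm
    push_neg at hnm
    have hnPI := hnm hik
    rw [IsPIModel] at hnPI
    have hRows' := rowsOK_merge hRows i hik
    have hnRep : ¬ Represents G P (mergeCols M i) := fun h => hnPI ⟨hRows', h⟩
    rw [Represents] at hnRep
    push_neg at hnRep
    obtain ⟨u, v, huv, hniff⟩ := hnRep
    rcases hniff with ⟨hAdj, hno⟩ | ⟨hAdj, hPor, c, huc, hvc⟩
    · -- old adjacency survives merging, contradiction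
      obtain ⟨hPor, d, hud, hvd⟩ := (hRep u v huv).mp hAdj
      have hdk := d.isLt
      refine hno hPor ⟨if d.val ≤ i then d.val else d.val - 1, by split_ifs <;> omega⟩
        ?_ ?_
      · rw [merge_iff M i hik]; exact ⟨d, hud, rfl⟩
      · rw [merge_iff M i hik]; exact ⟨d, hvd, rfl⟩
    · -- merging creates a new adjacency
      rw [merge_iff M i hik] at huc hvc
      obtain ⟨du, hdu, hfdu⟩ := huc
      obtain ⟨dv, hdv, hfdv⟩ := hvc
      by_cases hdd : du = dv
      · subst hdd
        exact hAdj ((hRep u v huv).mpr ⟨hPor, du, hdu, hdv⟩)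
      · have hdd' : du.val ≠ dv.val := fun h => hdd (Fin.ext h)
        have hDu := du.isLt; have hDv := dv.isLt
        have hcase : (du.val = i ∧ dv.val = i + 1) ∨ (du.val = i + 1 ∧ dv.val = i) := by
          split_ifs at hfdu hfdv <;> omega
        rcases hcase with ⟨h1, h2⟩ | ⟨h1, h2⟩
        · have e1 : (⟨i, by omega⟩ : Fin k) = du := Fin.ext h1.symm
          have e2 : (⟨i + 1, hik⟩ : Fin k) = dv := Fin.ext h2.symm
          exact inner u v huv hAdj hPor (e1 ▸ hdu) (e2 ▸ hdv)
        · have e1 : (⟨i, by omega⟩ : Fin k) = dv := Fin.ext h2.symm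
          have e2 : (⟨i + 1, hik⟩ : Fin k) = du := Fin.ext h1.symm
          exact inner v u (Ne.symm huv) (fun h => hAdj h.symm) hPor.symm
            (e1 ▸ hdv) (e2 ▸ hdu)
  refine ⟨j, hj, fun j' hj' => ?_⟩
  by_contra hne
  rcases lt_trichotomy j' j with h | h | h
  · exact key j' j h hj' hj
  · exact hne h
  · exact key j j' h hj hj'
end

section
/- In every normal probe interval model of a connected probe interval graph, the vertex set of no column is a subset of the vertex set of a different column. -/
open Set

lemma mergeCols_iff {V : Type} {k : ℕ} (M : V → Fin k → Prop) (i : ℕ)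
    (hik : i + 1 < k) (v : V) (j : Fin (k - 1)) :
    mergeCols M i v j ↔
      ∃ c : Fin k, M v c ∧ (if c.val ≤ i then c.val else c.val - 1) = j.val := by
  have hj := j.isLt
  unfold mergeCols
  split_ifs with h1 h2
  · constructor
    · intro h; exact ⟨_, h, by simp; omega⟩
    · rintro ⟨c, hc, he⟩
      have hceq : c = ⟨j.val, by omega⟩ := by
        apply Fin.ext; simp only []
        split_ifs at he <;> omega
      rw [hceq] at hc; exact hc
  · constructor
    · rintro (h | h)
      · exact ⟨_, h, by simp; omega⟩
      · exact ⟨_, h, by simp; omega⟩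
    · rintro ⟨c, hc, he⟩
      split_ifs at he with hci
      · left
        have hceq : c = ⟨i, by omega⟩ := by apply Fin.ext; simp only []; omega
        rw [hceq] at hc; exact hc
      · right
        have hceq : c = ⟨i + 1, by omega⟩ := by apply Fin.ext; simp only []; omega
        rw [hceq] at hc; exact hc
  · constructor
    · intro h; exact ⟨_, h, by simp; omega⟩
    · rintro ⟨c, hc, he⟩
      have hceq : c = ⟨j.val + 1, by omega⟩ := by
        apply Fin.ext; simp only []
        split_ifs at he <;> omega
      rw [hceq] at hc; exact hc

lemma merge_ok {V : Type} {k : ℕ} (G : SimpleGraph V) (P : Set V)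
    (M : V → Fin k → Prop) (hpi : IsPIModel G P M) (i : ℕ) (hik : i + 1 < k)
    (hsub : colVerts M ⟨i, by omega⟩ ⊆ colVerts M ⟨i + 1, hik⟩ ∨
            colVerts M ⟨i + 1, hik⟩ ⊆ colVerts M ⟨i, by omega⟩) :
    CanMerge G P M i := by
  obtain ⟨hrows, hrep⟩ := hpi
  refine ⟨hik, ?_, ?_⟩
  · -- RowsOK
    intro v
    constructor
    · obtain ⟨c, hc⟩ := (hrows v).1
      refine ⟨⟨if c.val ≤ i then c.val else c.val - 1, by have := c.isLt; split_ifs <;> omega⟩, ?_⟩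
      show mergeCols M i v _
      rw [mergeCols_iff M i hik]
      exact ⟨c, hc, rfl⟩
    · intro j1 j2 j3 h12 h23 hm1 hm3
      simp only [Set.mem_setOf_eq] at hm1 hm3 ⊢
      rw [mergeCols_iff M i hik] at hm1 hm3 ⊢
      by_cases he1 : j2 = j1
      · rw [he1]; exact hm1
      by_cases he3 : j2 = j3
      · rw [he3]; exact hm3
      obtain ⟨c1, hc1, hf1⟩ := hm1
      obtain ⟨c3, hc3, hf3⟩ := hm3
      have h12' : j1.val < j2.val := by
        rcases lt_or_eq_of_le h12 with h | h
        · exact h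
        · exact absurd h.symm he1
      have h23' : j2.val < j3.val := by
        rcases lt_or_eq_of_le h23 with h | h
        · exact h
        · exact absurd h he3
      have hc1lt := c1.isLt
      have hc3lt := c3.isLt
      set c2v : ℕ := if j2.val < i then j2.val
        else if j2.val = i then (if c1.val ≤ i then i else i + 1)
        else j2.val + 1 with hc2v
      have hj2 := j2.isLt
      have hc2lt : c2v < k := by simp only [hc2v]; split_ifs <;> omega
      have hle1 : c1 ≤ (⟨c2v, hc2lt⟩ : Fin k) := by
        show c1.val ≤ c2v
        simp only [hc2v]
        split_ifs at hf1 ⊢ <;> omega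
      have hle3 : (⟨c2v, hc2lt⟩ : Fin k) ≤ c3 := by
        show c2v ≤ c3.val
        simp only [hc2v]
        split_ifs at hf3 ⊢ <;> omega
      have hmid : M v ⟨c2v, hc2lt⟩ := (hrows v).2 c1 ⟨c2v, hc2lt⟩ c3 hle1 hle3 hc1 hc3
      refine ⟨⟨c2v, hc2lt⟩, hmid, ?_⟩
      simp only [hc2v]
      split_ifs at hf1 ⊢ <;> omega
  · -- Represents
    intro u v huv
    rw [hrep u v huv]
    constructor
    · rintro ⟨hP, c, hu, hv⟩
      refine ⟨hP, ⟨if c.val ≤ i then c.val else c.val - 1,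
        by have := c.isLt; split_ifs <;> omega⟩, ?_, ?_⟩ <;>
        · rw [mergeCols_iff M i hik]; exact ⟨c, by assumption, rfl⟩
    · rintro ⟨hP, j, hu, hv⟩
      refine ⟨hP, ?_⟩
      rw [mergeCols_iff M i hik] at hu hv
      obtain ⟨cu, hcu, hfu⟩ := hu
      obtain ⟨cv, hcv, hfv⟩ := hv
      have hcult := cu.isLt
      have hcvlt := cv.isLt
      by_cases hcc : cu = cv
      · exact ⟨cv, hcc ▸ hcu, hcv⟩
      · have hne : cu.val ≠ cv.val := fun h => hcc (Fin.ext h)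
        have hpair : (cu.val = i ∧ cv.val = i + 1) ∨ (cu.val = i + 1 ∧ cv.val = i) := by
          split_ifs at hfu hfv <;> omega
        rcases hsub with hs | hs
        · rcases hpair with ⟨h1, h2⟩ | ⟨h1, h2⟩
          · have : M u ⟨i + 1, hik⟩ := hs (show M u ⟨i, _⟩ from by
              have : cu = ⟨i, by omega⟩ := Fin.ext h1
              rwa [this] at hcu)
            have hv' : M v ⟨i + 1, hik⟩ := by
              have : cv = ⟨i + 1, hik⟩ := Fin.ext h2
              rwa [this] at hcv
            exact ⟨⟨i + 1, hik⟩, this, hv'⟩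
          · have : M v ⟨i + 1, hik⟩ := hs (show M v ⟨i, _⟩ from by
              have : cv = ⟨i, by omega⟩ := Fin.ext h2
              rwa [this] at hcv)
            have hu' : M u ⟨i + 1, hik⟩ := by
              have : cu = ⟨i + 1, hik⟩ := Fin.ext h1
              rwa [this] at hcu
            exact ⟨⟨i + 1, hik⟩, hu', this⟩
        · rcases hpair with ⟨h1, h2⟩ | ⟨h1, h2⟩
          · have : M v ⟨i, by omega⟩ := hs (show M v ⟨i + 1, hik⟩ from by
              have : cv = ⟨i + 1, hik⟩ := Fin.ext h2
              rwa [this] at hcv)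
            have hu' : M u ⟨i, by omega⟩ := by
              have : cu = ⟨i, by omega⟩ := Fin.ext h1
              rwa [this] at hcu
            exact ⟨⟨i, by omega⟩, hu', this⟩
          · have : M u ⟨i, by omega⟩ := hs (show M u ⟨i + 1, hik⟩ from by
              have : cu = ⟨i + 1, hik⟩ := Fin.ext h1
              rwa [this] at hcu)
            have hv' : M v ⟨i, by omega⟩ := by
              have : cv = ⟨i, by omega⟩ := Fin.ext h2
              rwa [this] at hcv
            exact ⟨⟨i, by omega⟩, this, hv'⟩

/-- In every normal probe interval model of a connected probe interval
graph, the vertex set of no column is a subset of the vertex set of a different column. -/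
theorem stmt5 {V : Type} (G : SimpleGraph V) (P : Set V)
    (hIndep : ∀ u v : V, u ∉ P → v ∉ P → ¬ G.Adj u v)
    (hConn : G.Connected)
    {k : ℕ} (M : V → Fin k → Prop) (hM : IsNormalModel G P M) :
    ∀ j j' : Fin k, j ≠ j' → ¬ colVerts M j ⊆ colVerts M j' := by
  intro j j' hne hsub
  obtain ⟨hpi, _, hmin⟩ := hM
  have hrows := hpi.1
  have hjne : j.val ≠ j'.val := fun h => hne (Fin.ext h)
  have hj := j.isLt
  have hj' := j'.isLt
  rcases lt_or_gt_of_ne hjne with hlt | hgt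
  · -- j < j' : merge columns j and j+1
    have hik : j.val + 1 < k := by omega
    apply hmin j.val
    apply merge_ok G P M hpi j.val hik
    left
    intro v hv
    have hv' : M v j' := hsub hv
    have h1 : j ≤ (⟨j.val + 1, hik⟩ : Fin k) := by show j.val ≤ j.val + 1; omega
    have h2 : (⟨j.val + 1, hik⟩ : Fin k) ≤ j' := by show j.val + 1 ≤ j'.val; omega
    exact (hrows v).2 j ⟨j.val + 1, hik⟩ j' h1 h2 hv hv'
  · -- j' < j : merge columns j-1 and j
    have hik : (j.val - 1) + 1 < k := by omega
    apply hmin (j.val - 1)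
    apply merge_ok G P M hpi (j.val - 1) hik
    right
    intro v hv
    have hvj : M v j := by
      have : (⟨(j.val - 1) + 1, hik⟩ : Fin k) = j := Fin.ext (by simp; omega)
      rwa [this] at hv
    have hv' : M v j' := hsub hvj
    have h1 : j' ≤ (⟨j.val - 1, by omega⟩ : Fin k) := by show j'.val ≤ j.val - 1; omega
    have h2 : (⟨j.val - 1, by omega⟩ : Fin k) ≤ j := by show j.val - 1 ≤ j.val; omega
    exact (hrows v).2 j' ⟨j.val - 1, by omega⟩ j h1 h2 hv' hvj
end

section
/- In every normal probe interval model of a connected probe interval graph G, the probe set of every column that is not a clique column is a proper subset of the probe set of the column immediately to its left or of the probe set of the column immediately to its right. -/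
open Set

private lemma M_congr {V : Type} {k : ℕ} (M : V → Fin k → Prop) (v : V) {a b : Fin k}
    (h : (a:ℕ) = (b:ℕ)) (hm : M v a) : M v b := by
  have : a = b := Fin.ext h
  rwa [this] at hm

private lemma merged_iff {V : Type} {k : ℕ} (M : V → Fin k → Prop) (i : ℕ) (hik : i + 1 < k)
    (v : V) (m : Fin (k-1)) :
    mergeCols M i v m ↔
      (((m:ℕ) < i ∧ M v ⟨(m:ℕ), by have := m.isLt; omega⟩) ∨
       ((m:ℕ) = i ∧ (M v ⟨i, by omega⟩ ∨ M v ⟨i+1, hik⟩)) ∨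
       (i < (m:ℕ) ∧ M v ⟨(m:ℕ)+1, by have := m.isLt; omega⟩)) := by
  unfold mergeCols
  split_ifs with h1 h2
  · constructor
    · intro h; exact Or.inl ⟨h1, h⟩
    · rintro (⟨_, h⟩ | ⟨h2, _⟩ | ⟨h2, _⟩)
      · exact h
      · omega
      · omega
  · constructor
    · intro h; exact Or.inr (Or.inl ⟨h2, h⟩)
    · rintro (⟨h', _⟩ | ⟨_, h⟩ | ⟨h', _⟩)
      · omega
      · exact h
      · omega
  · constructor
    · intro h; exact Or.inr (Or.inr ⟨by omega, h⟩)
    · rintro (⟨h', _⟩ | ⟨h', _⟩ | ⟨_, h⟩)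
      · omega
      · omega
      · exact h

private lemma merge_mem {V : Type} {k : ℕ} (M : V → Fin k → Prop) (i : ℕ) (hik : i + 1 < k)
    {v : V} {c : Fin k} (hc : M v c) :
    ∃ m : Fin (k-1), mergeCols M i v m ∧
      ((c:ℕ) ≤ i → (m:ℕ) = min (c:ℕ) i) ∧ ((c:ℕ) = i+1 → (m:ℕ) = i) ∧
      (i+1 < (c:ℕ) → (m:ℕ) = (c:ℕ) - 1) := by
  rcases lt_trichotomy (c:ℕ) i with h | h | h
  · refine ⟨⟨(c:ℕ), by have := c.isLt; omega⟩, ?_, ?_, ?_, ?_⟩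
    · exact (merged_iff M i hik v _).mpr (Or.inl ⟨h, hc⟩)
    · intro _; simp only [Fin.val_mk]; omega
    · intro h'; omega
    · intro h'; omega
  · refine ⟨⟨i, by omega⟩, ?_, ?_, ?_, ?_⟩
    · exact (merged_iff M i hik v _).mpr (Or.inr (Or.inl ⟨rfl, Or.inl (M_congr M v h hc)⟩))
    · intro _; simp only [Fin.val_mk]; omega
    · intro h'; omega
    · intro h'; omega
  · rcases Nat.eq_or_lt_of_le (Nat.succ_le_of_lt h) with h' | h'
    · refine ⟨⟨i, by omega⟩, ?_, ?_, ?_, ?_⟩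
      · exact (merged_iff M i hik v _).mpr
          (Or.inr (Or.inl ⟨rfl, Or.inr (M_congr M v h'.symm hc)⟩))
      · intro h''; omega
      · intro _; simp only [Fin.val_mk]
      · intro h''; omega
    · refine ⟨⟨(c:ℕ) - 1, by have := c.isLt; omega⟩, ?_, ?_, ?_, ?_⟩
      · refine (merged_iff M i hik v _).mpr (Or.inr (Or.inr ⟨?_, ?_⟩))
        · simp only [Fin.val_mk]; omega
        · exact M_congr M v (by simp only [Fin.val_mk]; omega) hc
      · intro h''; omega
      · intro h''; omega
      · intro _; simp only [Fin.val_mk]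

private lemma merge_shared {V : Type} {k : ℕ} (M : V → Fin k → Prop) (i : ℕ)
    (hik : i + 1 < k) {u v : V} {c : Fin k} (hu : M u c) (hv : M v c) :
    ∃ m : Fin (k-1), mergeCols M i u m ∧ mergeCols M i v m := by
  obtain ⟨m1, hm1, e1, e2, e3⟩ := merge_mem M i hik hu
  obtain ⟨m2, hm2, f1, f2, f3⟩ := merge_mem M i hik hv
  have : m1 = m2 := by
    apply Fin.ext
    rcases lt_trichotomy (c:ℕ) (i+1) with h | h | h
    · rw [e1 (by omega), f1 (by omega)]
    · rw [e2 h, f2 h]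
    · rw [e3 h, f3 h]
  exact ⟨m1, hm1, this ▸ hm2⟩

private lemma merge_rowsOK {V : Type} {k : ℕ} (M : V → Fin k → Prop) (i : ℕ)
    (hik : i + 1 < k) (hR : RowsOK M) : RowsOK (mergeCols M i) := by
  intro v
  constructor
  · obtain ⟨c, hc⟩ := (hR v).1
    obtain ⟨m, hm, -⟩ := merge_mem M i hik hc
    exact ⟨m, hm⟩
  · intro a b c hab hbc ha hc
    have ha' := (merged_iff M i hik v a).mp ha
    have hc' := (merged_iff M i hik v c).mp hc
    have hab' : (a:ℕ) ≤ (b:ℕ) := hab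
    have hbc' : (b:ℕ) ≤ (c:ℕ) := hbc
    have consec := (hR v).2
    obtain ⟨a', ha'M, ha'v⟩ : ∃ a' : Fin k, M v a' ∧
        (((a:ℕ) < i ∧ (a':ℕ) = a) ∨ ((a:ℕ) = i ∧ ((a':ℕ) = i ∨ (a':ℕ) = i+1)) ∨
          (i < (a:ℕ) ∧ (a':ℕ) = a+1)) := by
      rcases ha' with ⟨h1, h2⟩ | ⟨h1, h2 | h2⟩ | ⟨h1, h2⟩
      · exact ⟨_, h2, Or.inl ⟨h1, rfl⟩⟩
      · exact ⟨_, h2, Or.inr (Or.inl ⟨h1, Or.inl rfl⟩)⟩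
      · exact ⟨_, h2, Or.inr (Or.inl ⟨h1, Or.inr rfl⟩)⟩
      · exact ⟨_, h2, Or.inr (Or.inr ⟨h1, rfl⟩)⟩
    obtain ⟨c', hc'M, hc'v⟩ : ∃ c' : Fin k, M v c' ∧
        (((c:ℕ) < i ∧ (c':ℕ) = c) ∨ ((c:ℕ) = i ∧ ((c':ℕ) = i ∨ (c':ℕ) = i+1)) ∨
          (i < (c:ℕ) ∧ (c':ℕ) = c+1)) := by
      rcases hc' with ⟨h1, h2⟩ | ⟨h1, h2 | h2⟩ | ⟨h1, h2⟩
      · exact ⟨_, h2, Or.inl ⟨h1, rfl⟩⟩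
      · exact ⟨_, h2, Or.inr (Or.inl ⟨h1, Or.inl rfl⟩)⟩
      · exact ⟨_, h2, Or.inr (Or.inl ⟨h1, Or.inr rfl⟩)⟩
      · exact ⟨_, h2, Or.inr (Or.inr ⟨h1, rfl⟩)⟩
    rcases lt_trichotomy (b:ℕ) i with hb | hb | hb
    · have haa : (a':ℕ) ≤ (b:ℕ) := by omega
      have hcc : (b:ℕ) ≤ (c':ℕ) := by omega
      have : M v ⟨(b:ℕ), by have := b.isLt; omega⟩ :=
        consec a' ⟨(b:ℕ), by have := b.isLt; omega⟩ c' haa hcc ha'M hc'M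
      exact (merged_iff M i hik v b).mpr (Or.inl ⟨hb, this⟩)
    · by_cases hai : (a:ℕ) = i
      · have : a = b := Fin.ext (by omega)
        rwa [this] at ha
      by_cases hci : (c:ℕ) = i
      · have : c = b := Fin.ext (by omega)
        rwa [this] at hc
      have haa : (a':ℕ) ≤ i := by omega
      have hcc : i ≤ (c':ℕ) := by omega
      have : M v ⟨i, by omega⟩ :=
        consec a' ⟨i, by omega⟩ c' haa hcc ha'M hc'M
      exact (merged_iff M i hik v b).mpr (Or.inr (Or.inl ⟨hb, Or.inl this⟩))
    · have haa : (a':ℕ) ≤ (b:ℕ)+1 := by omega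
      have hcc : (b:ℕ)+1 ≤ (c':ℕ) := by omega
      have : M v ⟨(b:ℕ)+1, by have := b.isLt; omega⟩ :=
        consec a' ⟨(b:ℕ)+1, by have := b.isLt; omega⟩ c' haa hcc ha'M hc'M
      exact (merged_iff M i hik v b).mpr (Or.inr (Or.inr ⟨hb, this⟩))

private lemma merge_fail {V : Type} (G : SimpleGraph V) (P : Set V) {k : ℕ}
    (M : V → Fin k → Prop) (hR : RowsOK M) (hRep : Represents G P M)
    (i : ℕ) (hik : i + 1 < k) (hmin : ¬ CanMerge G P M i) :
    ∃ u v : V, u ≠ v ∧ ¬ G.Adj u v ∧ (u ∈ P ∨ v ∈ P) ∧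
      M u ⟨i, by omega⟩ ∧ ¬ M u ⟨i+1, hik⟩ ∧ M v ⟨i+1, hik⟩ ∧ ¬ M v ⟨i, by omega⟩ := by
  have hnotrep : ¬ Represents G P (mergeCols M i) := by
    intro h
    exact hmin ⟨hik, merge_rowsOK M i hik hR, h⟩
  unfold Represents at hnotrep
  push_neg at hnotrep
  obtain ⟨u, v, hne, hniff⟩ := hnotrep
  rcases hniff with ⟨hadj, hnc⟩ | ⟨hnadj, hpor, m, hum, hvm⟩
  · obtain ⟨hpor, c, huc, hvc⟩ := (hRep u v hne).mp hadj
    obtain ⟨m, hm1, hm2⟩ := merge_shared M i hik huc hvc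
    exact absurd hm2 (hnc hpor m hm1)
  have hadj := hnadj
  have hnoshare : ∀ c : Fin k, ¬ (M u c ∧ M v c) := by
    intro c hcc
    exact hadj ((hRep u v hne).mpr ⟨hpor, c, hcc.1, hcc.2⟩)
  have hu' := (merged_iff M i hik u m).mp hum
  have hv' := (merged_iff M i hik v m).mp hvm
  rcases hu' with ⟨h1, h2⟩ | ⟨h1, h2⟩ | ⟨h1, h2⟩ <;>
    rcases hv' with ⟨g1, g2⟩ | ⟨g1, g2⟩ | ⟨g1, g2⟩
  · exact absurd ⟨h2, g2⟩ (hnoshare _)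
  · omega
  · omega
  · omega
  · rcases h2 with h2 | h2 <;> rcases g2 with g2 | g2
    · exact absurd ⟨h2, g2⟩ (hnoshare _)
    · refine ⟨u, v, hne, hadj, hpor, h2, ?_, g2, ?_⟩
      · intro hu1; exact hnoshare _ ⟨hu1, g2⟩
      · intro hv0; exact hnoshare _ ⟨h2, hv0⟩
    · refine ⟨v, u, hne.symm, fun hx => hadj hx.symm, hpor.symm, g2, ?_, h2, ?_⟩
      · intro hv1; exact hnoshare _ ⟨h2, hv1⟩
      · intro hu0; exact hnoshare _ ⟨hu0, g2⟩
    · exact absurd ⟨h2, g2⟩ (hnoshare _)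
  · omega
  · omega
  · omega
  · exact absurd ⟨h2, g2⟩ (hnoshare _)

private lemma exists_maxclique {V : Type} (G : SimpleGraph V) (P : Set V)
    (Q : Set V) (hQP : Q ⊆ P) (hQcl : Q.Pairwise G.Adj) :
    ∃ K, Q ⊆ K ∧ IsMaxPClique G P K := by
  set S : Set (Set V) := {K | K ⊆ P ∧ K.Pairwise G.Adj} with hS
  have hchain : ∀ c ⊆ S, IsChain (· ⊆ ·) c → c.Nonempty →
      ∃ ub ∈ S, ∀ s ∈ c, s ⊆ ub := by
    intro c hcS hchain _
    refine ⟨⋃₀ c, ⟨?_, ?_⟩, fun s hs => subset_sUnion_of_mem hs⟩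
    · exact sUnion_subset fun s hs => (hcS hs).1
    · rintro a ⟨s1, hs1, ha⟩ b ⟨s2, hs2, hb⟩ hab
      rcases hchain.total hs1 hs2 with h | h
      · exact (hcS hs2).2 (h ha) hb hab
      · exact (hcS hs1).2 ha (h hb) hab
  obtain ⟨K, hQK, hKmax⟩ := zorn_subset_nonempty S hchain Q ⟨hQP, hQcl⟩
  refine ⟨K, hQK, ⟨hKmax.prop, ?_⟩⟩
  intro K' hK'P hK'cl hKK'
  exact Set.Subset.antisymm (hKmax.2 ⟨hK'P, hK'cl⟩ hKK') hKK'


/-- In every normal probe interval model of a connected probe interval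
graph `G`, the probe set of every non-clique column is a proper subset of the probe
set of the column immediately to its left or of the column immediately to its right. -/
theorem stmt6 {V : Type} (G : SimpleGraph V) (P : Set V)
    (hIndep : ∀ u v : V, u ∉ P → v ∉ P → ¬ G.Adj u v)
    (hConn : G.Connected)
    {k : ℕ} (M : V → Fin k → Prop) (hM : IsNormalModel G P M) :
    ∀ j : Fin k, ¬ IsCliqueCol G P M j →
      ∃ j' : Fin k, (j'.val + 1 = j.val ∨ j.val + 1 = j'.val) ∧
        probeSetCol P M j ⊂ probeSetCol P M j' := by
  obtain ⟨⟨hRows, hRep⟩, _, hmin⟩ := hM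
  intro j hj
  set Q := probeSetCol P M j with hQdef
  have hQP : Q ⊆ P := fun q hq => hq.1
  have hQcl : Q.Pairwise G.Adj := by
    intro q1 h1 q2 h2 hne
    exact (hRep q1 q2 hne).mpr ⟨Or.inl h1.1, j, h1.2, h2.2⟩
  obtain ⟨K, hQK, hKmax⟩ := exists_maxclique G P Q hQP hQcl
  have hnsub : ¬ K ⊆ colVerts M j := fun h => hj ⟨K, hKmax, h⟩
  obtain ⟨p, hpK, hpj⟩ := Set.not_subset.mp hnsub
  have hpj : ¬ M p j := hpj
  have hpP : p ∈ P := hKmax.1.1 hpK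
  obtain ⟨c0, hc0⟩ := (hRows p).1
  have hc0 : M p c0 := hc0
  have hshare : ∀ q ∈ Q, ∃ c : Fin k, M p c ∧ M q c := by
    intro q hq
    have hpq : p ≠ q := fun h => hpj (h ▸ hq.2)
    have hadj : G.Adj p q := hKmax.1.2 hpK (hQK hq) hpq
    obtain ⟨_, c, h1, h2⟩ := (hRep p q hpq).mp hadj
    exact ⟨c, h1, h2⟩
  rcases Nat.lt_or_ge (c0:ℕ) (j:ℕ) with hside | hside
  · -- p entirely left of j
    have hall : ∀ c : Fin k, M p c → (c:ℕ) < (j:ℕ) := by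
      intro c hc
      by_contra hge
      push_neg at hge
      exact hpj ((hRows p).2 c0 j c (by exact_mod_cast Nat.le_of_lt hside)
        (by exact_mod_cast hge) hc0 hc)
    have hj1 : 1 ≤ (j:ℕ) := by have := hall c0 hc0; omega
    set j' : Fin k := ⟨(j:ℕ) - 1, by have := j.isLt; omega⟩ with hj'
    have hsub : Q ⊆ probeSetCol P M j' := by
      intro q hq
      obtain ⟨c, hpc, hqc⟩ := hshare q hq
      have hcj : (c:ℕ) < (j:ℕ) := hall c hpc
      exact ⟨hq.1, (hRows q).2 c j' j (by simp [Fin.le_def, hj']; try omega)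
        (by simp [Fin.le_def, hj']; try omega) hqc hq.2⟩
    refine ⟨j', Or.inl (by simp [hj']; omega), ?_⟩
    rw [Set.ssubset_def]
    refine ⟨hsub, fun hcon => ?_⟩
    have hik : ((j:ℕ) - 1) + 1 < k := by have := j.isLt; omega
    obtain ⟨u, v, hne, hnadj, hpor, hu0, hu1, hv1, hv0⟩ :=
      merge_fail G P M hRows hRep ((j:ℕ) - 1) hik (hmin ((j:ℕ) - 1))
    have hv1' : M v j := M_congr M v (by simp only [Fin.val_mk]; omega) hv1
    have hu1' : ¬ M u j := fun h => hu1 (M_congr M u (by simp only [Fin.val_mk]; omega) h)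
    rcases hpor with huP | hvP
    · have : u ∈ Q := hcon ⟨huP, hu0⟩
      exact hu1' this.2
    · have hvQ : v ∈ Q := ⟨hvP, hv1'⟩
      obtain ⟨c, hpc, hvc⟩ := hshare v hvQ
      have : M v ⟨(j:ℕ) - 1, by have := j.isLt; omega⟩ :=
        (hRows v).2 c ⟨(j:ℕ) - 1, by have := j.isLt; omega⟩ j
          (by have := hall c hpc; simp [Fin.le_def]; try omega)
          (by simp [Fin.le_def]; try omega) hvc hv1'
      exact hv0 this
  · -- p entirely right of j
    have hc0j : (j:ℕ) < (c0:ℕ) := by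
      rcases Nat.eq_or_lt_of_le hside with h | h
      · exact absurd (M_congr M p h.symm hc0) hpj
      · exact h
    have hall : ∀ c : Fin k, M p c → (j:ℕ) < (c:ℕ) := by
      intro c hc
      by_contra hle
      push_neg at hle
      exact hpj ((hRows p).2 c j c0 (by exact_mod_cast hle)
        (by exact_mod_cast Nat.le_of_lt hc0j) hc hc0)
    have hjk : (j:ℕ) + 1 < k := by have := c0.isLt; omega
    set j' : Fin k := ⟨(j:ℕ) + 1, hjk⟩ with hj'
    have hsub : Q ⊆ probeSetCol P M j' := by
      intro q hq
      obtain ⟨c, hpc, hqc⟩ := hshare q hq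
      have hcj : (j:ℕ) < (c:ℕ) := hall c hpc
      exact ⟨hq.1, (hRows q).2 j j' c (by simp [Fin.le_def, hj'])
        (by simp [Fin.le_def, hj']; try omega) hq.2 hqc⟩
    refine ⟨j', Or.inr (by simp [hj']), ?_⟩
    rw [Set.ssubset_def]
    refine ⟨hsub, fun hcon => ?_⟩
    obtain ⟨u, v, hne, hnadj, hpor, hu0, hu1, hv1, hv0⟩ :=
      merge_fail G P M hRows hRep (j:ℕ) hjk (hmin (j:ℕ))
    have hu0' : M u j := M_congr M u (by simp only [Fin.val_mk]) hu0
    have hv0' : ¬ M v j := fun h => hv0 (M_congr M v (by simp only [Fin.val_mk]) h)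
    rcases hpor with huP | hvP
    · have huQ : u ∈ Q := ⟨huP, hu0'⟩
      obtain ⟨c, hpc, huc⟩ := hshare u huQ
      have : M u ⟨(j:ℕ) + 1, hjk⟩ :=
        (hRows u).2 j ⟨(j:ℕ) + 1, hjk⟩ c (by simp [Fin.le_def])
          (by have := hall c hpc; simp [Fin.le_def]; try omega) hu0' huc
      exact hu1 this
    · have : v ∈ Q := hcon ⟨hvP, hv1⟩
      exact hv0' this.2
end

section
/- In every normal probe interval model of a connected probe interval graph, no two consecutive columns have equal probe sets. -/
open Set

/-- Lower original index corresponding to merged column index `jmerged`. -/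
def mcLo (i jm : ℕ) : ℕ := if jm ≤ i then jm else jm + 1

/-- Upper original index corresponding to merged column index `jmerged`. -/
def mcHi (i jm : ℕ) : ℕ := if jm < i then jm else jm + 1

lemma mergeCols_iff_s7 {V : Type} {k : ℕ} (M : V → Fin k → Prop) (i : ℕ)
    (hik : i + 1 < k) (v : V) (jj : Fin (k-1)) :
    mergeCols M i v jj ↔
      ∃ t : Fin k, M v t ∧ mcLo i jj.val ≤ t.val ∧ t.val ≤ mcHi i jj.val := by
  have hjj := jj.isLt
  unfold mergeCols mcLo mcHi
  rcases lt_trichotomy jj.val i with h | h | h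
  · rw [dif_pos h, if_pos (le_of_lt h), if_pos h]
    constructor
    · intro hm; exact ⟨⟨jj.val, by omega⟩, hm, le_refl _, le_refl _⟩
    · rintro ⟨t, ht, h3, h4⟩
      have he : (⟨jj.val, by omega⟩ : Fin k) = t := Fin.ext (by simp; omega)
      rw [he]; exact ht
  · rw [dif_neg (by omega), dif_pos h, if_pos (by omega), if_neg (by omega)]
    constructor
    · rintro (hm | hm)
      · exact ⟨⟨i, by omega⟩, hm, by simp; omega, by simp; omega⟩
      · exact ⟨⟨i + 1, by omega⟩, hm, by simp; omega, by simp; omega⟩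
    · rintro ⟨t, ht, h3, h4⟩
      rcases Nat.eq_or_lt_of_le h3 with h5 | h5
      · left
        have he : (⟨i, by omega⟩ : Fin k) = t := Fin.ext (by simp; omega)
        rw [he]; exact ht
      · right
        have he : (⟨i + 1, by omega⟩ : Fin k) = t := Fin.ext (by simp; omega)
        rw [he]; exact ht
  · rw [dif_neg (by omega), dif_neg (by omega), if_neg (by omega), if_neg (by omega)]
    constructor
    · intro hm; exact ⟨⟨jj.val + 1, by omega⟩, hm, by simp, by simp⟩
    · rintro ⟨t, ht, h3, h4⟩
      have he : (⟨jj.val + 1, by omega⟩ : Fin k) = t := Fin.ext (by simp; omega)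
      rw [he]; exact ht

lemma mc_exists_jm (i t k : ℕ) (hik : i + 1 < k) (ht : t < k) :
    ∃ jm, jm < k - 1 ∧ mcLo i jm ≤ t ∧ t ≤ mcHi i jm := by
  unfold mcLo mcHi
  refine ⟨if t ≤ i then t else if t = i + 1 then i else t - 1, ?_, ?_, ?_⟩ <;>
    split_ifs <;> omega

lemma mcHi_le (i jm : ℕ) : mcHi i jm ≤ jm + 1 := by
  unfold mcHi; split_ifs <;> omega

lemma mcLo_le_mcHi (i jm : ℕ) : mcLo i jm ≤ mcHi i jm := by
  unfold mcLo mcHi; split_ifs <;> omega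

lemma mcLo_mono (i : ℕ) {a b : ℕ} (h : a ≤ b) : mcLo i a ≤ mcLo i b := by
  unfold mcLo; split_ifs <;> omega

lemma mcHi_mono (i : ℕ) {a b : ℕ} (h : a ≤ b) : mcHi i a ≤ mcHi i b := by
  unfold mcHi; split_ifs <;> omega

lemma mc_cases (i jm : ℕ) :
    mcLo i jm = mcHi i jm ∨ (jm = i ∧ mcLo i jm = i ∧ mcHi i jm = i + 1) := by
  unfold mcLo mcHi; split_ifs <;> omega

/-- In every normal probe interval model of a connected probe interval
graph, no two consecutive columns have equal probe sets. -/
theorem stmt7 {V : Type} (G : SimpleGraph V) (P : Set V)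
    (hIndep : ∀ u v : V, u ∉ P → v ∉ P → ¬ G.Adj u v)
    (hConn : G.Connected)
    {k : ℕ} (M : V → Fin k → Prop) (hM : IsNormalModel G P M) :
    ∀ j j' : Fin k, j.val + 1 = j'.val →
      probeSetCol P M j ≠ probeSetCol P M j' := by
  intro j j' hjj' heq
  obtain ⟨⟨hRows, hRep⟩, hTaut, hMin⟩ := hM
  set i := j.val with hi
  have hik : i + 1 < k := by have := j'.isLt; omega
  -- probes have a 1 in column i iff in column i+1
  have hprobe : ∀ p ∈ P, (M p j ↔ M p j') := by
    intro p hp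
    have h1 : p ∈ probeSetCol P M j ↔ p ∈ probeSetCol P M j' := by rw [heq]
    simpa [probeSetCol, hp] using h1
  apply hMin i
  refine ⟨hik, ?_, ?_⟩
  · -- RowsOK for merged matrix
    intro v
    obtain ⟨⟨t, ht⟩, hcons⟩ := hRows v
    constructor
    · obtain ⟨jm, hjm, hlo, hhi⟩ := mc_exists_jm i t.val k hik t.isLt
      exact ⟨⟨jm, hjm⟩, (mergeCols_iff_s7 M i hik v ⟨jm, hjm⟩).2 ⟨t, ht, hlo, hhi⟩⟩
    · intro a b c hab hbc ha hc
      rw [Set.mem_setOf_eq, mergeCols_iff_s7 M i hik v] at ha hc ⊢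
      obtain ⟨ta, hta, hloa, hhia⟩ := ha
      obtain ⟨tc, htc, hloc, hhic⟩ := hc
      have hab' : a.val ≤ b.val := hab
      have hbc' : b.val ≤ c.val := hbc
      have h1 : ta.val ≤ mcHi i b.val := le_trans hhia (mcHi_mono i hab')
      have h2 : mcLo i b.val ≤ tc.val := le_trans (mcLo_mono i hbc') hloc
      by_cases hcase : mcLo i b.val ≤ ta.val
      · exact ⟨ta, hta, hcase, h1⟩
      · have hb : mcLo i b.val < k := by
          have h3 := mcLo_le_mcHi i b.val
          have h4 := mcHi_le i b.val
          have hb2 := b.isLt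
          omega
        refine ⟨⟨mcLo i b.val, hb⟩, ?_, le_refl _, mcLo_le_mcHi i b.val⟩
        refine hcons ta ⟨mcLo i b.val, hb⟩ tc ?_ ?_ hta htc
        · show ta.val ≤ mcLo i b.val
          omega
        · show mcLo i b.val ≤ tc.val
          exact h2
  · -- Represents for merged matrix
    intro u v huv
    rw [hRep u v huv]
    constructor
    · rintro ⟨hP, t, hut, hvt⟩
      obtain ⟨jm, hjm, hlo, hhi⟩ := mc_exists_jm i t.val k hik t.isLt
      exact ⟨hP, ⟨jm, hjm⟩, (mergeCols_iff_s7 M i hik u ⟨jm, hjm⟩).2 ⟨t, hut, hlo, hhi⟩,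
        (mergeCols_iff_s7 M i hik v ⟨jm, hjm⟩).2 ⟨t, hvt, hlo, hhi⟩⟩
    · rintro ⟨hP, jm, hmu, hmv⟩
      refine ⟨hP, ?_⟩
      rw [mergeCols_iff_s7 M i hik] at hmu hmv
      obtain ⟨tu, htu, hlou, hhiu⟩ := hmu
      obtain ⟨tv, htv, hlov, hhiv⟩ := hmv
      rcases mc_cases i jm.val with hc | ⟨hjmi, hc1, hc2⟩
      · have : tu = tv := Fin.ext (by omega)
        exact ⟨tu, htu, this ▸ htv⟩
      · -- both tu, tv ∈ {j, j'}
        have hu2 : tu = j ∨ tu = j' := by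
          rcases (show tu.val = i ∨ tu.val = i + 1 by omega) with h | h
          · exact Or.inl (Fin.ext (by omega))
          · exact Or.inr (Fin.ext (by omega))
        have hv2 : tv = j ∨ tv = j' := by
          rcases (show tv.val = i ∨ tv.val = i + 1 by omega) with h | h
          · exact Or.inl (Fin.ext (by omega))
          · exact Or.inr (Fin.ext (by omega))
        rcases hP with hup | hvp
        · have hui : M u j ∧ M u j' := by
            rcases hu2 with h | h
            · exact ⟨h ▸ htu, (hprobe u hup).1 (h ▸ htu)⟩
            · exact ⟨(hprobe u hup).2 (h ▸ htu), h ▸ htu⟩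
          rcases hv2 with h | h
          · exact ⟨j, hui.1, h ▸ htv⟩
          · exact ⟨j', hui.2, h ▸ htv⟩
        · have hvi : M v j ∧ M v j' := by
            rcases hv2 with h | h
            · exact ⟨h ▸ htv, (hprobe v hvp).1 (h ▸ htv)⟩
            · exact ⟨(hprobe v hvp).2 (h ▸ htv), h ▸ htv⟩
          rcases hu2 with h | h
          · exact ⟨j, h ▸ htu, hvi.1⟩
          · exact ⟨j', h ▸ htu, hvi.2⟩
end

section
/- Every normal probe interval model of a connected probe interval graph with n vertices and m edges has at most n columns, and there is a universal constant c such that every such model has at most c·(n+m+1) entries equal to 1. -/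
open Set

/-! ### Auxiliary material for `stmt8` -/

section Stmt8Aux

variable {V : Type} {k : ℕ}

/-- Row membership as a predicate on natural numbers. -/
def Qrow (M : V → Fin k → Prop) (v : V) (n : ℕ) : Prop := ∃ h : n < k, M v ⟨n, h⟩

lemma Qrow_cons {M : V → Fin k → Prop} {v : V} (hc : ConsecSet {j | M v j})
    {a b c : ℕ} (hab : a ≤ b) (hbc : b ≤ c) (ha : Qrow M v a) (hcq : Qrow M v c) :
    Qrow M v b := by
  obtain ⟨hk1, h1⟩ := ha
  obtain ⟨hk2, h2⟩ := hcq
  have hbk : b < k := lt_of_le_of_lt hbc hk2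
  exact ⟨hbk, hc ⟨a, hk1⟩ ⟨b, hbk⟩ ⟨c, hk2⟩ hab hbc h1 h2⟩

lemma mergeCols_elim {M : V → Fin k → Prop} {i : ℕ} {v : V} {j : Fin (k - 1)}
    (h : mergeCols M i v j) :
    ∃ x, Qrow M v x ∧ (j : ℕ) ≤ x ∧ x ≤ (j : ℕ) + 1 ∧
      ((j : ℕ) < i → x = (j : ℕ)) ∧ (i < (j : ℕ) → x = (j : ℕ) + 1) ∧
      ((j : ℕ) = i → (x = i ∨ x = i + 1)) := by
  have hj := j.isLt
  unfold mergeCols at h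
  split_ifs at h with h1 h2
  · exact ⟨(j : ℕ), ⟨by omega, h⟩, le_refl _, by omega, fun _ => rfl, by omega, by omega⟩
  · rcases h with h | h
    · exact ⟨i, ⟨by omega, h⟩, by omega, by omega, by omega, by omega, fun _ => Or.inl rfl⟩
    · exact ⟨i + 1, ⟨by omega, h⟩, by omega, by omega, by omega, by omega, fun _ => Or.inr rfl⟩
  · exact ⟨(j : ℕ) + 1, ⟨by omega, h⟩, by omega, le_refl _, by omega, fun _ => rfl, by omega⟩

lemma mergeCols_of_Q {M : V → Fin k → Prop} {i : ℕ} {v : V} (j : Fin (k - 1)) {x : ℕ}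
    (hx : Qrow M v x)
    (hxj : ((j : ℕ) < i ∧ x = (j : ℕ)) ∨ ((j : ℕ) = i ∧ (x = i ∨ x = i + 1)) ∨
      (i < (j : ℕ) ∧ x = (j : ℕ) + 1)) :
    mergeCols M i v j := by
  obtain ⟨hk, hM⟩ := hx
  unfold mergeCols
  rcases hxj with ⟨h1, rfl⟩ | ⟨h1, h2⟩ | ⟨h1, rfl⟩
  · rw [dif_pos h1]; exact hM
  · rw [dif_neg (by omega), dif_pos h1]
    rcases h2 with rfl | rfl
    · exact Or.inl hM
    · exact Or.inr hM
  · rw [dif_neg (by omega), dif_neg (by omega)]; exact hM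

lemma mergeCols_of_shared {M : V → Fin k → Prop} {i : ℕ} (hi : i + 1 < k) {u v : V}
    {c : Fin k} (hu : M u c) (hv : M v c) :
    ∃ j, mergeCols M i u j ∧ mergeCols M i v j := by
  have hck := c.isLt
  have hq_u : Qrow M u (c : ℕ) := ⟨hck, hu⟩
  have hq_v : Qrow M v (c : ℕ) := ⟨hck, hv⟩
  rcases lt_trichotomy (c : ℕ) i with h | h | h
  · exact ⟨⟨(c : ℕ), by omega⟩, mergeCols_of_Q _ hq_u (Or.inl ⟨h, rfl⟩),
      mergeCols_of_Q _ hq_v (Or.inl ⟨h, rfl⟩)⟩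
  · exact ⟨⟨i, by omega⟩, mergeCols_of_Q _ hq_u (Or.inr (Or.inl ⟨rfl, Or.inl h⟩)),
      mergeCols_of_Q _ hq_v (Or.inr (Or.inl ⟨rfl, Or.inl h⟩))⟩
  · rcases Nat.eq_or_lt_of_le h with h' | h'
    · exact ⟨⟨i, by omega⟩, mergeCols_of_Q _ hq_u (Or.inr (Or.inl ⟨rfl, Or.inr h'.symm⟩)),
        mergeCols_of_Q _ hq_v (Or.inr (Or.inl ⟨rfl, Or.inr h'.symm⟩))⟩
    · have hj : (c : ℕ) - 1 < k - 1 := by omega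
      have hcase : (((⟨(c : ℕ) - 1, hj⟩ : Fin (k - 1)) : ℕ) < i ∧ (c : ℕ) = ((⟨(c : ℕ) - 1, hj⟩ : Fin (k - 1)) : ℕ)) ∨
          (((⟨(c : ℕ) - 1, hj⟩ : Fin (k - 1)) : ℕ) = i ∧ ((c : ℕ) = i ∨ (c : ℕ) = i + 1)) ∨
          (i < ((⟨(c : ℕ) - 1, hj⟩ : Fin (k - 1)) : ℕ) ∧ (c : ℕ) = ((⟨(c : ℕ) - 1, hj⟩ : Fin (k - 1)) : ℕ) + 1) :=
        Or.inr (Or.inr ⟨(by omega : i < (c : ℕ) - 1), (by omega : (c : ℕ) = (c : ℕ) - 1 + 1)⟩)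
      exact ⟨⟨(c : ℕ) - 1, hj⟩, mergeCols_of_Q _ hq_u hcase, mergeCols_of_Q _ hq_v hcase⟩

lemma endpoints_of_cross {G : SimpleGraph V} {P : Set V} {M : V → Fin k → Prop}
    (hRows : RowsOK M) {i : ℕ} (hi : i + 1 < k) {a b : V}
    (hp : a ∈ P ∨ b ∈ P) (hna : ¬ G.Adj a b) (hns : ¬ ∃ c, M a c ∧ M b c)
    (hqa : Qrow M a i) (hqb : Qrow M b (i + 1)) :
    (a ∈ P ∨ b ∈ P) ∧ ¬ G.Adj a b ∧ (∀ j, ¬ (M a j ∧ M b j)) ∧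
      (∃ c : Fin k, (c : ℕ) = i ∧ IsRightEnd M a c) ∧
      (∃ c : Fin k, (c : ℕ) = i + 1 ∧ IsLeftEnd M b c) := by
  obtain ⟨hka, hMa⟩ := hqa
  obtain ⟨hkb, hMb⟩ := hqb
  refine ⟨hp, hna, fun c hc => hns ⟨c, hc⟩, ⟨⟨i, hka⟩, rfl, hMa, ?_⟩, ⟨⟨i + 1, hkb⟩, rfl, hMb, ?_⟩⟩
  · intro c hc
    by_contra hlt
    rw [not_le] at hlt
    have hlt' : i < (c : ℕ) := Fin.lt_def.mp hlt
    have hq : Qrow M a (i + 1) :=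
      Qrow_cons (hRows a).2 (by omega) (by omega : i + 1 ≤ (c : ℕ)) ⟨hka, hMa⟩ ⟨c.isLt, hc⟩
    obtain ⟨hk', hM'⟩ := hq
    exact hns ⟨⟨i + 1, hk'⟩, hM', hMb⟩
  · intro c hc
    by_contra hlt
    rw [not_le] at hlt
    have hlt' : (c : ℕ) < i + 1 := Fin.lt_def.mp hlt
    have hq : Qrow M b i :=
      Qrow_cons (hRows b).2 (by omega : (c : ℕ) ≤ i) (by omega) ⟨c.isLt, hc⟩ ⟨hkb, hMb⟩
    obtain ⟨hk', hM'⟩ := hq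
    exact hns ⟨⟨i, hk'⟩, hMa, hM'⟩

lemma key_lemma {G : SimpleGraph V} {P : Set V} {M : V → Fin k → Prop}
    (hPI : IsPIModel G P M) (hmin : MinimalModel G P M) :
    ∀ i : ℕ, i + 1 < k →
    ∃ u w : V, (u ∈ P ∨ w ∈ P) ∧ ¬ G.Adj u w ∧ (∀ j, ¬ (M u j ∧ M w j)) ∧
      (∃ c : Fin k, (c : ℕ) = i ∧ IsRightEnd M u c) ∧
      (∃ c : Fin k, (c : ℕ) = i + 1 ∧ IsLeftEnd M w c) := by
  intro i hi
  obtain ⟨hRows, hRep⟩ := hPI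
  have hn2 : ¬ IsPIModel G P (mergeCols M i) := fun h => hmin i ⟨hi, h⟩
  -- merged rows are OK
  have hRows' : RowsOK (mergeCols M i) := by
    intro v
    obtain ⟨⟨c, hc⟩, hcons⟩ := hRows v
    constructor
    · obtain ⟨j, hj, -⟩ := mergeCols_of_shared hi hc hc
      exact ⟨j, hj⟩
    · intro j1 j2 j3 h12 h23 hm1 hm3
      obtain ⟨x1, hq1, ha1, hb1, hl1, hr1, hc1⟩ := mergeCols_elim hm1
      obtain ⟨x3, hq3, ha3, hb3, hl3, hr3, hc3⟩ := mergeCols_elim hm3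
      have h12' : (j1 : ℕ) ≤ (j2 : ℕ) := h12
      have h23' : (j2 : ℕ) ≤ (j3 : ℕ) := h23
      simp only [Set.mem_setOf_eq] at *
      rcases lt_trichotomy (j2 : ℕ) i with h | h | h
      · have hx1 : x1 = (j1 : ℕ) := hl1 (by omega)
        exact mergeCols_of_Q _ (Qrow_cons hcons (by omega) (by omega) hq1 hq3)
          (Or.inl ⟨h, rfl⟩)
      · by_cases hx1 : x1 ≤ i
        · exact mergeCols_of_Q _ (Qrow_cons hcons hx1 (by omega) hq1 hq3)
            (Or.inr (Or.inl ⟨h, Or.inl rfl⟩))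
        · have hx1' : x1 = i + 1 := by omega
          subst hx1'
          exact mergeCols_of_Q _ hq1 (Or.inr (Or.inl ⟨h, Or.inr rfl⟩))
      · have hx3 : x3 = (j3 : ℕ) + 1 := hr3 (by omega)
        exact mergeCols_of_Q _ (Qrow_cons hcons (by omega) (by omega) hq1 hq3)
          (Or.inr (Or.inr ⟨h, rfl⟩))
  have hnRep : ¬ Represents G P (mergeCols M i) := fun h => hn2 ⟨hRows', h⟩
  rw [Represents] at hnRep
  push_neg at hnRep
  obtain ⟨u, v, huv, hne⟩ := hnRep
  have horig := hRep u v huv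
  rcases hne with ⟨hA, hX⟩ | ⟨hA, hcond, j, hju, hjv⟩
  · exfalso
    obtain ⟨hcond, c, hc1, hc2⟩ := horig.mp hA
    obtain ⟨j, hju, hjv⟩ := mergeCols_of_shared hi hc1 hc2
    exact hX hcond j hju hjv
  · have hnsh : ¬ ∃ c, M u c ∧ M v c := fun hs => hA (horig.mpr ⟨hcond, hs⟩)
    obtain ⟨x1, hq1, ha1, hb1, hl1, hr1, hm1⟩ := mergeCols_elim hju
    obtain ⟨x2, hq2, ha2, hb2, hl2, hr2, hm2⟩ := mergeCols_elim hjv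
    have hxne : x1 ≠ x2 := by
      rintro rfl
      obtain ⟨hk1, hM1⟩ := hq1
      obtain ⟨hk2, hM2⟩ := hq2
      exact hnsh ⟨⟨x1, hk1⟩, hM1, hM2⟩
    have hx12 : (x1 = i ∧ x2 = i + 1) ∨ (x1 = i + 1 ∧ x2 = i) := by
      rcases lt_trichotomy (j : ℕ) i with h | h | h
      · exact absurd (by rw [hl1 h, hl2 h]) hxne
      · rcases hm1 h with rfl | rfl <;> rcases hm2 h with h' | h' <;> omega
      · exact absurd (by rw [hr1 h, hr2 h]) hxne
    rcases hx12 with ⟨hx1, hx2⟩ | ⟨hx1, hx2⟩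
    · subst hx1; subst hx2
      exact ⟨u, v, endpoints_of_cross hRows hi hcond hA hnsh hq1 hq2⟩
    · subst hx1; subst hx2
      exact ⟨v, u, endpoints_of_cross hRows hi hcond.symm (fun h => hA h.symm)
        (fun ⟨c, h1, h2⟩ => hnsh ⟨c, h2, h1⟩) hq2 hq1⟩

end Stmt8Aux

/-- Every normal probe interval model of a connected probe interval graph
with `n` vertices and `m` edges has at most `n` columns, and there is a universal
constant `c` such that every such model has at most `c * (n + m + 1)` entries equal to 1. -/
theorem stmt8 :
    ∃ c : ℕ, ∀ (V : Type) [Fintype V] (G : SimpleGraph V) (P : Set V),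
      (∀ u v : V, u ∉ P → v ∉ P → ¬ G.Adj u v) → G.Connected →
      ∀ (k : ℕ) (M : V → Fin k → Prop), IsNormalModel G P M →
        k ≤ Fintype.card V ∧
        {p : V × Fin k | M p.1 p.2}.ncard ≤
          c * (Fintype.card V + G.edgeSet.ncard + 1) := by
  classical
  refine ⟨4, ?_⟩
  intro V _ G P hNP hconn k M hNorm
  obtain ⟨⟨hRows, hRep⟩, hTaut, hMin⟩ := hNorm
  have hkey := key_lemma (G := G) (P := P) (M := M) ⟨hRows, hRep⟩ hMin
  have hkey2 : ∀ i : ℕ, i + 1 < k → ∃ u w : V, ∃ c1 c2 : Fin k,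
      (u ∈ P ∨ w ∈ P) ∧ ¬ G.Adj u w ∧ (∀ j, ¬ (M u j ∧ M w j)) ∧
      (c1 : ℕ) = i ∧ IsRightEnd M u c1 ∧ (c2 : ℕ) = i + 1 ∧ IsLeftEnd M w c2 := by
    intro i h
    obtain ⟨u, w, h1, h2, h3, ⟨c1, hc1, hr⟩, ⟨c2, hc2, hl⟩⟩ := hkey i h
    exact ⟨u, w, c1, c2, h1, h2, h3, hc1, hr, hc2, hl⟩
  choose U W CU CW hP hA hS hCU hCUR hCW hCWL using hkey2
  have hVne : Nonempty V := hconn.nonempty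
  -- every column is the right endpoint of some row
  have hre : ∀ i : Fin k, ∃ v : V, IsRightEnd M v i := by
    intro i
    by_cases h : (i : ℕ) + 1 < k
    · refine ⟨U (i : ℕ) h, ?_⟩
      have hc := hCU (i : ℕ) h
      have hcr := hCUR (i : ℕ) h
      have hcei : CU (i : ℕ) h = i := Fin.ext hc
      rw [hcei] at hcr
      exact hcr
    · by_cases h2 : 1 < k
      · have hk2 : k - 2 + 1 < k := by omega
        have hcw := hCW (k - 2) hk2
        have hcwl := hCWL (k - 2) hk2
        have hik : (i : ℕ) = k - 1 := by have := i.isLt; omega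
        have hci : CW (k - 2) hk2 = i := Fin.ext (by omega)
        rw [hci] at hcwl
        refine ⟨W (k - 2) hk2, hcwl.1, fun j hj => ?_⟩
        rw [Fin.le_def]
        have := j.isLt; omega
      · have hk1 : k = 1 := by have := i.isLt; omega
        obtain ⟨v0⟩ := hVne
        obtain ⟨j, hj⟩ := (hRows v0).1
        have hji : j = i := Fin.ext (by have := j.isLt; have := i.isLt; omega)
        refine ⟨v0, hji ▸ hj, fun c hc => ?_⟩
        rw [Fin.le_def]
        have := c.isLt; have := i.isLt; omega
  choose f hf using hre
  have hinj : Function.Injective f := by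
    intro a b hab
    have h1 := hf a
    have h2 := hf b
    rw [hab] at h1
    exact le_antisymm (h2.2 _ h1.1) (h1.2 _ h2.1)
  have hk_le : k ≤ Fintype.card V := by
    simpa using Fintype.card_le_of_injective f hinj
  refine ⟨hk_le, ?_⟩
  -- the split of the entries
  have hsub : {p : V × Fin k | M p.1 p.2} ⊆
      {p : V × Fin k | M p.1 p.2 ∧ IsRightEnd M p.1 p.2} ∪
      {p : V × Fin k | M p.1 p.2 ∧ ¬ IsRightEnd M p.1 p.2} := by
    intro p hp
    by_cases h : IsRightEnd M p.1 p.2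
    · exact Or.inl ⟨hp, h⟩
    · exact Or.inr ⟨hp, h⟩
  have hStopcard : {p : V × Fin k | M p.1 p.2 ∧ IsRightEnd M p.1 p.2}.ncard ≤
      Fintype.card V := by
    have hIO : Set.InjOn (fun p : V × Fin k => p.1)
        {p : V × Fin k | M p.1 p.2 ∧ IsRightEnd M p.1 p.2} := by
      rintro ⟨v, j⟩ hj ⟨v', j'⟩ hj' hvv
      simp only [Set.mem_setOf_eq] at hj hj'
      obtain rfl : v = v' := hvv
      have : j = j' := le_antisymm (hj'.2.2 _ hj.1) (hj.2.2 _ hj'.1)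
      rw [this]
    have h := Set.ncard_le_ncard_of_injOn (fun p : V × Fin k => p.1)
      (fun a _ => Set.mem_univ a.1) hIO Set.finite_univ
    simpa [Set.ncard_univ, Nat.card_eq_fintype_card] using h
  -- facts about internal entries
  have hSintfact : ∀ v (j : Fin k), M v j → ¬ IsRightEnd M v j →
      (j : ℕ) + 1 < k ∧ Qrow M v ((j : ℕ) + 1) := by
    intro v j hMv hnr
    have hex : ∃ c, M v c ∧ ¬ c ≤ j := by
      by_contra hcon
      push_neg at hcon
      exact hnr ⟨hMv, hcon⟩
    obtain ⟨c, hc, hcle⟩ := hex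
    rw [not_le] at hcle
    have hlt : (j : ℕ) < (c : ℕ) := Fin.lt_def.mp hcle
    have hck := c.isLt
    exact ⟨by omega, Qrow_cons (hRows v).2 (by omega : (j : ℕ) ≤ (j : ℕ) + 1)
      (by omega) ⟨j.isLt, hMv⟩ ⟨hck, hc⟩⟩
  -- adjacency facts
  have hAdjA : ∀ v (j : Fin k) (h : (j : ℕ) + 1 < k), Qrow M v ((j : ℕ) + 1) → M v j →
      (U (j : ℕ) h ∈ P ∨ v ∈ P) → G.Adj v (U (j : ℕ) h) := by
    intro v j h hq hMv hc
    have hcu := hCU (j : ℕ) h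
    have hcur := hCUR (j : ℕ) h
    have hMU : M (U (j : ℕ) h) j := by
      have he : CU (j : ℕ) h = j := Fin.ext hcu
      rw [he] at hcur
      exact hcur.1
    have hne : v ≠ U (j : ℕ) h := by
      rintro rfl
      obtain ⟨hk', hM'⟩ := hq
      have h2 : (j : ℕ) + 1 ≤ (CU (j : ℕ) h : ℕ) := hcur.2 _ hM'
      omega
    exact (hRep v _ hne).mpr ⟨hc.symm, j, hMv, hMU⟩
  have hAdjB : ∀ v (j : Fin k) (h : (j : ℕ) + 1 < k), Qrow M v ((j : ℕ) + 1) → M v j →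
      ¬ (U (j : ℕ) h ∈ P ∨ v ∈ P) → G.Adj v (W (j : ℕ) h) := by
    intro v j h hq hMv hB
    push_neg at hB
    have hWP : W (j : ℕ) h ∈ P := (hP (j : ℕ) h).resolve_left hB.1
    have hcw := hCW (j : ℕ) h
    have hcwl := hCWL (j : ℕ) h
    obtain ⟨hk', hM'⟩ := hq
    have hMW : M (W (j : ℕ) h) ⟨(j : ℕ) + 1, hk'⟩ := by
      have he : CW (j : ℕ) h = ⟨(j : ℕ) + 1, hk'⟩ := Fin.ext (by rw [hcw])
      rw [he] at hcwl
      exact hcwl.1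
    have hne : v ≠ W (j : ℕ) h := by
      rintro rfl
      have h2 : (CW (j : ℕ) h : ℕ) ≤ (j : ℕ) := hcwl.2 j hMv
      omega
    exact (hRep v _ hne).mpr ⟨Or.inr hWP, ⟨(j : ℕ) + 1, hk'⟩, hM', hMW⟩
  -- the tie-breaking bit
  obtain ⟨ee⟩ : Nonempty (V ≃ Fin (Fintype.card V)) := ⟨Fintype.equivFin V⟩
  have hbitne : ∀ a b : V, a ≠ b →
      (decide ((ee a : ℕ) < (ee b : ℕ))) ≠ (decide ((ee b : ℕ) < (ee a : ℕ))) := by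
    intro a b hab h
    rw [decide_eq_decide] at h
    have : (ee a : ℕ) ≠ (ee b : ℕ) := fun hh => hab (ee.injective (Fin.ext hh))
    omega
  -- cardinality of the target
  have htn : (G.edgeSet ×ˢ (Set.univ : Set (Bool × Bool))).ncard = G.edgeSet.ncard * 4 := by
    rw [← Nat.card_coe_set_eq, Nat.card_congr (Equiv.Set.prod _ _), Nat.card_prod,
      Nat.card_coe_set_eq, Nat.card_congr (Equiv.Set.univ _), Nat.card_eq_fintype_card]
    simp
  have hSintcard : {p : V × Fin k | M p.1 p.2 ∧ ¬ IsRightEnd M p.1 p.2}.ncard ≤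
      G.edgeSet.ncard * 4 := by
    rw [← htn]
    refine Set.ncard_le_ncard_of_injOn
      (fun p : V × Fin k =>
        if h : (p.2 : ℕ) + 1 < k then
          if U (p.2 : ℕ) h ∈ P ∨ p.1 ∈ P then
            (s(p.1, U (p.2 : ℕ) h), true, decide ((ee p.1 : ℕ) < (ee (U (p.2 : ℕ) h) : ℕ)))
          else
            (s(p.1, W (p.2 : ℕ) h), false, decide ((ee p.1 : ℕ) < (ee (W (p.2 : ℕ) h) : ℕ)))
        else (s(p.1, p.1), true, true))
      ?_ ?_ (Set.toFinite _)
    · rintro ⟨v, j⟩ hp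
      simp only [Set.mem_setOf_eq] at hp
      obtain ⟨h, hq⟩ := hSintfact v j hp.1 hp.2
      dsimp only
      rw [dif_pos h]
      by_cases hc : U (j : ℕ) h ∈ P ∨ v ∈ P
      · rw [if_pos hc]
        simp only [Set.mem_prod, Set.mem_univ, and_true, SimpleGraph.mem_edgeSet]
        exact hAdjA v j h hq hp.1 hc
      · rw [if_neg hc]
        simp only [Set.mem_prod, Set.mem_univ, and_true, SimpleGraph.mem_edgeSet]
        exact hAdjB v j h hq hp.1 hc
    · rintro ⟨v, j⟩ hp ⟨v', j'⟩ hp' heq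
      simp only [Set.mem_setOf_eq] at hp hp'
      obtain ⟨h, hq⟩ := hSintfact v j hp.1 hp.2
      obtain ⟨h', hq'⟩ := hSintfact v' j' hp'.1 hp'.2
      dsimp only at heq
      rw [dif_pos h, dif_pos h'] at heq
      by_cases hc : U (j : ℕ) h ∈ P ∨ v ∈ P <;>
        by_cases hc' : U (j' : ℕ) h' ∈ P ∨ v' ∈ P
      · rw [if_pos hc, if_pos hc'] at heq
        have hE := congrArg Prod.fst heq
        have hB2 := congrArg (fun q : Sym2 V × Bool × Bool => q.2.2) heq
        simp only at hE hB2
        rw [Sym2.eq_iff] at hE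
        rcases hE with ⟨hv, hU⟩ | ⟨hv, hU⟩
        · have hcur := hCUR (j : ℕ) h
          have hcur' := hCUR (j' : ℕ) h'
          rw [hU] at hcur
          have hce : CU (j : ℕ) h = CU (j' : ℕ) h' :=
            le_antisymm (hcur'.2 _ hcur.1) (hcur.2 _ hcur'.1)
          have hje : (j : ℕ) = (j' : ℕ) := by
            have e1 := hCU (j : ℕ) h
            have e2 := hCU (j' : ℕ) h'
            rw [hce] at e1
            omega
          simp only [Prod.mk.injEq]
          exact ⟨hv, Fin.ext hje⟩
        · exfalso
          have hadj := hAdjA v j h hq hp.1 hc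
          have hne := hadj.ne
          rw [← hv, ← hU] at hB2
          exact hbitne v (U (j : ℕ) h) hne hB2
      · rw [if_pos hc, if_neg hc'] at heq
        have hB1 := congrArg (fun q : Sym2 V × Bool × Bool => q.2.1) heq
        simp at hB1
      · rw [if_neg hc, if_pos hc'] at heq
        have hB1 := congrArg (fun q : Sym2 V × Bool × Bool => q.2.1) heq
        simp at hB1
      · rw [if_neg hc, if_neg hc'] at heq
        have hE := congrArg Prod.fst heq
        have hB2 := congrArg (fun q : Sym2 V × Bool × Bool => q.2.2) heq
        simp only at hE hB2
        rw [Sym2.eq_iff] at hE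
        rcases hE with ⟨hv, hU⟩ | ⟨hv, hU⟩
        · have hcwl := hCWL (j : ℕ) h
          have hcwl' := hCWL (j' : ℕ) h'
          rw [hU] at hcwl
          have hce : CW (j : ℕ) h = CW (j' : ℕ) h' :=
            le_antisymm (hcwl.2 _ hcwl'.1) (hcwl'.2 _ hcwl.1)
          have hje : (j : ℕ) = (j' : ℕ) := by
            have e1 := hCW (j : ℕ) h
            have e2 := hCW (j' : ℕ) h'
            rw [hce] at e1
            omega
          simp only [Prod.mk.injEq]
          exact ⟨hv, Fin.ext hje⟩
        · exfalso
          have hadj := hAdjB v j h hq hp.1 hc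
          have hne := hadj.ne
          rw [← hv, ← hU] at hB2
          exact hbitne v (W (j : ℕ) h) hne hB2
  calc {p : V × Fin k | M p.1 p.2}.ncard
      ≤ ({p : V × Fin k | M p.1 p.2 ∧ IsRightEnd M p.1 p.2} ∪
         {p : V × Fin k | M p.1 p.2 ∧ ¬ IsRightEnd M p.1 p.2}).ncard :=
        Set.ncard_le_ncard hsub (Set.toFinite _)
    _ ≤ {p : V × Fin k | M p.1 p.2 ∧ IsRightEnd M p.1 p.2}.ncard +
        {p : V × Fin k | M p.1 p.2 ∧ ¬ IsRightEnd M p.1 p.2}.ncard :=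
        Set.ncard_union_le _ _
    _ ≤ 4 * (Fintype.card V + G.edgeSet.ncard + 1) := by omega
end

section
/- In every normal probe interval model of a connected probe interval graph with more than one vertex, every column is the left endpoint of at least one row and the right endpoint of at least one row (where these endpoints may be degenerate). -/
open Set

lemma rowMin {V : Type} {k : ℕ} {M : V → Fin k → Prop} (hrows : RowsOK M)
    (v : V) : ∃ c : Fin k, IsLeftEnd M v c := by
  obtain ⟨l, hl, hmin⟩ := Set.exists_min_image {j | M v j} id (Set.toFinite _) (hrows v).1
  exact ⟨l, hl, fun j hj => hmin j hj⟩

lemma rowMax {V : Type} {k : ℕ} {M : V → Fin k → Prop} (hrows : RowsOK M)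
    (v : V) : ∃ c : Fin k, IsRightEnd M v c := by
  obtain ⟨l, hl, hmax⟩ := Set.exists_max_image {j | M v j} id (Set.toFinite _) (hrows v).1
  exact ⟨l, hl, fun j hj => hmax j hj⟩

lemma canMerge_aux {V : Type} {k : ℕ} (G : SimpleGraph V) (P : Set V)
    (M : V → Fin k → Prop) (hPI : IsPIModel G P M) (i : ℕ) (hi : i + 1 < k)
    (e : Fin (k - 1) → Fin k) (he : StrictMono e)
    (heq : ∀ v l, mergeCols M i v l ↔ M v (e l))
    (hpre : ∀ (u v : V) (c : Fin k), M u c → M v c → ∃ l, M u (e l) ∧ M v (e l)) :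
    CanMerge G P M i := by
  obtain ⟨hrows, hrep⟩ := hPI
  refine ⟨hi, fun v => ?_, fun u v huv => ?_⟩
  · constructor
    · obtain ⟨c, hc⟩ := (hrows v).1
      obtain ⟨l, hl, -⟩ := hpre v v c hc hc
      exact ⟨l, (heq v l).2 hl⟩
    · intro a b c hab hbc ha hc
      simp only [Set.mem_setOf_eq, heq] at *
      exact (hrows v).2 _ _ _ (he.monotone hab) (he.monotone hbc) ha hc
  · rw [hrep u v huv]
    constructor
    · rintro ⟨hp, c, hu, hv⟩
      obtain ⟨l, h1, h2⟩ := hpre u v c hu hv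
      exact ⟨hp, l, (heq u l).2 h1, (heq v l).2 h2⟩
    · rintro ⟨hp, l, hu, hv⟩
      exact ⟨hp, e l, (heq u l).1 hu, (heq v l).1 hv⟩

/-- If column `i+1` is contained in column `i`, the two can be merged. -/
lemma mergeL {V : Type} {k : ℕ} (G : SimpleGraph V) (P : Set V) (M : V → Fin k → Prop)
    (hPI : IsPIModel G P M) (i : ℕ) (hi : i + 1 < k)
    (hsub : ∀ v, M v ⟨i + 1, hi⟩ → M v ⟨i, by omega⟩) :
    CanMerge G P M i := by
  set e : Fin (k - 1) → Fin k := fun l =>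
    if h1 : l.val < i then ⟨l.val, by omega⟩
    else if h2 : l.val = i then ⟨i, by omega⟩
    else ⟨l.val + 1, by have := l.isLt; omega⟩ with he_def
  have heval : ∀ l : Fin (k - 1), (e l).val = if l.val ≤ i then l.val else l.val + 1 := by
    intro l
    simp only [he_def]
    split_ifs <;> simp_all <;> omega
  apply canMerge_aux G P M hPI i hi e
  · intro a b hab
    have := heval a; have := heval b
    rw [Fin.lt_def] at *
    split_ifs at * <;> omega
  · intro v l
    simp only [mergeCols, he_def]
    split_ifs with h1 h2
    · rfl
    · exact ⟨fun h => h.elim id (hsub v), Or.inl⟩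
    · rfl
  · intro u v c hu hv
    rcases Nat.lt_trichotomy c.val (i + 1) with hc | hc | hc
    · refine ⟨⟨c.val, by omega⟩, ?_, ?_⟩ <;>
      · have : e ⟨c.val, by omega⟩ = c := by
          apply Fin.ext; rw [heval]; simp only []; split_ifs <;> omega
        rw [this]; assumption
    · have hcc : c = ⟨i + 1, hi⟩ := Fin.ext hc
      refine ⟨⟨i, by omega⟩, ?_, ?_⟩ <;>
      · have : e ⟨i, by omega⟩ = ⟨i, by omega⟩ := by
          apply Fin.ext; rw [heval]; simp only []; split_ifs <;> omega
        rw [this]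
        first
          | exact hsub u (hcc ▸ hu)
          | exact hsub v (hcc ▸ hv)
    · refine ⟨⟨c.val - 1, by have := c.isLt; omega⟩, ?_, ?_⟩ <;>
      · have : e ⟨c.val - 1, by have := c.isLt; omega⟩ = c := by
          apply Fin.ext; rw [heval]; simp only []; split_ifs <;> omega
        rw [this]; assumption

/-- If column `i` is contained in column `i+1`, the two can be merged. -/
lemma mergeR {V : Type} {k : ℕ} (G : SimpleGraph V) (P : Set V) (M : V → Fin k → Prop)
    (hPI : IsPIModel G P M) (i : ℕ) (hi : i + 1 < k)
    (hsub : ∀ v, M v ⟨i, by omega⟩ → M v ⟨i + 1, hi⟩) :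
    CanMerge G P M i := by
  set e : Fin (k - 1) → Fin k := fun l =>
    if h1 : l.val < i then ⟨l.val, by omega⟩
    else if h2 : l.val = i then ⟨i + 1, hi⟩
    else ⟨l.val + 1, by have := l.isLt; omega⟩ with he_def
  have heval : ∀ l : Fin (k - 1), (e l).val = if l.val < i then l.val else l.val + 1 := by
    intro l
    simp only [he_def]
    split_ifs <;> simp_all <;> omega
  apply canMerge_aux G P M hPI i hi e
  · intro a b hab
    have := heval a; have := heval b
    rw [Fin.lt_def] at *
    split_ifs at * <;> omega
  · intro v l
    simp only [mergeCols, he_def]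
    split_ifs with h1 h2
    · rfl
    · exact ⟨fun h => h.elim (hsub v) id, Or.inr⟩
    · rfl
  · intro u v c hu hv
    rcases Nat.lt_trichotomy c.val i with hc | hc | hc
    · refine ⟨⟨c.val, by omega⟩, ?_, ?_⟩ <;>
      · have : e ⟨c.val, by omega⟩ = c := by
          apply Fin.ext; rw [heval]; simp only []; split_ifs <;> omega
        rw [this]; assumption
    · have hcc : c = ⟨i, by omega⟩ := Fin.ext hc
      refine ⟨⟨i, by omega⟩, ?_, ?_⟩ <;>
      · have : e ⟨i, by omega⟩ = ⟨i + 1, hi⟩ := by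
          apply Fin.ext; rw [heval]; simp only []; split_ifs <;> omega
        rw [this]
        first
          | exact hsub u (hcc ▸ hu)
          | exact hsub v (hcc ▸ hv)
    · refine ⟨⟨c.val - 1, by have := c.isLt; omega⟩, ?_, ?_⟩ <;>
      · have : e ⟨c.val - 1, by have := c.isLt; omega⟩ = c := by
          apply Fin.ext; rw [heval]; simp only []; split_ifs <;> omega
        rw [this]; assumption

/-- In a minimal model over a nonempty vertex set, every column is nonempty. -/
lemma col_nonempty {V : Type} {k : ℕ} (G : SimpleGraph V) (P : Set V)
    (M : V → Fin k → Prop) (hPI : IsPIModel G P M) (hmin : MinimalModel G P M)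
    (hV : Nonempty V) (j : Fin k) : ∃ v, M v j := by
  by_contra hempty
  push_neg at hempty
  by_cases hk : j.val + 1 < k
  · exact hmin j.val (mergeR G P M hPI j.val hk
      (fun v hv => absurd hv (hempty v)))
  · -- j is the last column
    have hjk : j.val = k - 1 := by have := j.isLt; omega
    rcases Nat.lt_or_ge 1 k with h2 | h2
    · have hi : (k - 2) + 1 < k := by omega
      apply hmin (k - 2) (mergeL G P M hPI (k - 2) hi ?_)
      intro v hv
      rw [show (⟨(k - 2) + 1, hi⟩ : Fin k) = j from Fin.ext (show k - 2 + 1 = j.val by omega)] at hv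
      exact absurd hv (hempty v)
    · -- k ≤ 1, so k = 1 (since j : Fin k) and every row is the single column j
      obtain ⟨v⟩ := hV
      obtain ⟨c, hc⟩ := (hPI.1 v).1
      have : c = j := Fin.ext (by have := c.isLt; have := j.isLt; omega)
      exact hempty v (this ▸ hc)

/-- In every normal probe interval model of a connected probe interval
graph with more than one vertex, every column is the left endpoint of at least one row
and the right endpoint of at least one row (possibly degenerate). -/
theorem stmt9 {V : Type} [Fintype V] (G : SimpleGraph V) (P : Set V)
    (hIndep : ∀ u v : V, u ∉ P → v ∉ P → ¬ G.Adj u v)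
    (hConn : G.Connected) (hcard : 1 < Fintype.card V)
    {k : ℕ} (M : V → Fin k → Prop) (hM : IsNormalModel G P M) :
    ∀ j : Fin k, (∃ v, IsLeftEnd M v j) ∧ (∃ v, IsRightEnd M v j) := by
  obtain ⟨hPI, -, hmin⟩ := hM
  have hV : Nonempty V := Fintype.card_pos_iff.mp (by omega)
  intro j
  constructor
  · by_contra hno
    push_neg at hno
    obtain ⟨w, hw⟩ := col_nonempty G P M hPI hmin hV j
    -- every row through column j extends strictly to the left of j
    have hsub : ∀ v, M v j → j.val ≠ 0 ∧ M v ⟨j.val - 1, by have := j.isLt; omega⟩ := by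
      intro v hv
      obtain ⟨c, hc, hcmin⟩ := rowMin hPI.1 v
      have hcj : c < j := by
        rcases lt_or_eq_of_le (hcmin j hv) with h | h
        · exact h
        · exact absurd (h ▸ ⟨hc, hcmin⟩) (hno v)
      have hj0 : j.val ≠ 0 := by have := Fin.lt_def.mp hcj; omega
      refine ⟨hj0, (hPI.1 v).2 c ⟨j.val - 1, by have := j.isLt; omega⟩ j ?_ ?_ hc hv⟩
      · exact Fin.le_def.mpr (show c.val ≤ j.val - 1 by have := Fin.lt_def.mp hcj; omega)
      · exact Fin.le_def.mpr (show j.val - 1 ≤ j.val by omega)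
    have hj0 : j.val ≠ 0 := (hsub w hw).1
    have hi : (j.val - 1) + 1 < k := by have := j.isLt; omega
    apply hmin (j.val - 1)
    apply mergeL G P M hPI (j.val - 1) hi
    intro v hv
    rw [show (⟨(j.val - 1) + 1, hi⟩ : Fin k) = j from Fin.ext (show j.val - 1 + 1 = j.val by omega)] at hv
    exact (hsub v hv).2
  · by_contra hno
    push_neg at hno
    obtain ⟨w, hw⟩ := col_nonempty G P M hPI hmin hV j
    have hsub : ∀ v, M v j → j.val + 1 < k ∧ M v ⟨j.val + 1, by
        obtain ⟨c, hc, hcmax⟩ := rowMax hPI.1 w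
        have : j < c := by
          rcases lt_or_eq_of_le (hcmax j hw) with h | h
          · exact h
          · exact absurd (h ▸ ⟨hc, hcmax⟩) (hno w)
        have := Fin.lt_def.mp this; have := c.isLt; omega⟩ := by
      intro v hv
      obtain ⟨c, hc, hcmax⟩ := rowMax hPI.1 v
      have hjc : j < c := by
        rcases lt_or_eq_of_le (hcmax j hv) with h | h
        · exact h
        · exact absurd (h ▸ ⟨hc, hcmax⟩) (hno v)
      have hjk : j.val + 1 < k := by have := Fin.lt_def.mp hjc; have := c.isLt; omega
      refine ⟨hjk, (hPI.1 v).2 j ⟨j.val + 1, hjk⟩ c ?_ ?_ hv hc⟩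
      · exact Fin.le_def.mpr (Nat.le_succ j.val)
      · rw [Fin.le_def]; have := Fin.lt_def.mp hjc; simp; omega
    have hjk : j.val + 1 < k := (hsub w hw).1
    apply hmin j.val
    apply mergeR G P M hPI j.val hjk
    intro v hv
    exact (hsub v hv).2
end
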